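/- arXiv:1709.03023 — 4 statements merged into one kernel-verified Lean document; each statement's English description precedes it below -/
import Mathlib

section
/- Let 𝔤 be a split simple subalgebra of a Lie algebra L over F and suppose L is (Γ,𝔤)-pregraded. Then the following are equivalent: (1) L is (Γ,𝔤)-graded; (2) L_0 = Σ_{α,−α∈Γ∖{0}} [L_α, L_{−α}]; (3) L = ⨁_{α∈Γ∖{0}} L_α + Σ_{α,−α∈Γ∖{0}} [L_α, L_{−α}]; (4) ≪𝔤≫ = L. -/
namespace WG

variable (F : Type*) [Field F]
variable (L : Type*) [LieRing L] [LieAlgebra F L]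

/-- The `α`-weight space of the `H`-module `L`:
`{x ∈ L | [h, x] = α(h) • x for all h ∈ H}`. -/
def wt (H : LieSubalgebra F L) (α : Module.Dual F H) : Submodule F L where
  carrier := {x | ∀ h : H, ⁅(h : L), x⁆ = α h • x}
  add_mem' := by
    intro a b ha hb h
    rw [lie_add, ha h, hb h, smul_add]
  zero_mem' := by
    intro h
    rw [lie_zero, smul_zero]
  smul_mem' := by
    intro c x hx h
    rw [lie_smul, hx h]
    exact smul_comm c _ x

/-- The linear span of all brackets `⁅m, n⁆` with `m ∈ M`, `n ∈ N`. -/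
def bracketSpan (M N : Submodule F L) : Submodule F L :=
  Submodule.span F {z | ∃ m ∈ M, ∃ n ∈ N, z = ⁅m, n⁆}

/-- `H` is a Cartan subalgebra of the subalgebra `g`: it is a nilpotent subalgebra of `g`
which is self-normalizing in `g`. -/
def IsCartanIn (g H : LieSubalgebra F L) : Prop :=
  H ≤ g ∧ LieRing.IsNilpotent H ∧
    ∀ x ∈ g, (∀ h ∈ H, ⁅x, h⁆ ∈ H) → x ∈ H

/-- The set of roots of `g` relative to `H` (nonzero weights of the `H`-module `g`). -/
def rootSet (g H : LieSubalgebra F L) : Set (Module.Dual F H) :=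
  {α | α ≠ 0 ∧ wt F L H α ⊓ g.toSubmodule ≠ ⊥}

/-- `H` is a splitting Cartan subalgebra of `g`: `g` is the sum of its `H`-weight spaces. -/
def IsSplitIn (g H : LieSubalgebra F L) : Prop :=
  IsCartanIn F L g H ∧
    g.toSubmodule = ⨆ α : Module.Dual F H, (wt F L H α ⊓ g.toSubmodule)

/-- The Lie subalgebra `N` of `L` is `(Γ, g)`-pregraded relative to the
Cartan subalgebra `H` of `g`: conditions (Γ1) and (Γ2). -/
def IsPregraded (N g H : LieSubalgebra F L) (Γ : Set (Module.Dual F H)) : Prop :=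
  g ≤ N ∧ IsCartanIn F L g H ∧ Γ.Finite ∧ (0 : Module.Dual F H) ∈ Γ ∧
    rootSet F L g H ⊆ Γ ∧
    N.toSubmodule = ⨆ α ∈ Γ, (wt F L H α ⊓ N.toSubmodule)

/-- `Σ_{α, -α ∈ Γ \ {0}} ⁅N_α, N_{-α}⁆`. -/
def zeroPart (N H : LieSubalgebra F L) (Γ : Set (Module.Dual F H)) : Submodule F L :=
  ⨆ α ∈ {α ∈ Γ | α ≠ 0 ∧ -α ∈ Γ},
    bracketSpan F L (wt F L H α ⊓ N.toSubmodule) (wt F L H (-α) ⊓ N.toSubmodule)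

/-- The Lie subalgebra `N` of `L` is `(Γ, g)`-graded: conditions (Γ1), (Γ2) and (Γ3). -/
def IsGraded (N g H : LieSubalgebra F L) (Γ : Set (Module.Dual F H)) : Prop :=
  IsPregraded F L N g H Γ ∧
    wt F L H 0 ⊓ N.toSubmodule = zeroPart F L N H Γ

/-- The set of weights of the `H`-module `L`. -/
def weightSet (H : LieSubalgebra F L) : Set (Module.Dual F H) :=
  {α | wt F L H α ≠ ⊥}

attribute [local instance 100] LieRing.ofAssociativeRing

/-- `sl_m(F)` realized as the trace-zero `m × m` matrices. -/
def slL (m : ℕ) : LieSubalgebra F (Matrix (Fin m) (Fin m) F) where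
  carrier := {x | Matrix.trace x = 0}
  add_mem' := by
    intro a b ha hb
    simp only [Set.mem_setOf_eq] at *
    simp [Matrix.trace_add, ha, hb]
  zero_mem' := by simp
  smul_mem' := by
    intro c x hx
    simp only [Set.mem_setOf_eq] at *
    simp [Matrix.trace_smul, hx]
  lie_mem' := by
    intro x y hx hy
    simp only [Set.mem_setOf_eq] at *
    rw [Ring.lie_def]
    simp [Matrix.trace_sub, Matrix.trace_mul_comm x y]

end WG

section Aux

variable {F : Type*} [Field F] {L : Type*} [LieRing L] [LieAlgebra F L]
  {H : LieSubalgebra F L}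

theorem lie_mem_wt {α β : Module.Dual F H} {x y : L}
    (hx : x ∈ WG.wt F L H α) (hy : y ∈ WG.wt F L H β) :
    ⁅x, y⁆ ∈ WG.wt F L H (α + β) := by
  intro h
  rw [leibniz_lie, hx h, hy h, lie_smul, smul_lie, LinearMap.add_apply, add_smul]

theorem biSup_induction {ι : Type*} {S : ι → Prop} (p : ι → Submodule F L) {C : L → Prop} {x : L}
    (hx : x ∈ ⨆ α, ⨆ _ : S α, p α) (hp : ∀ α, S α → ∀ y ∈ p α, C y) (h0 : C 0)
    (hadd : ∀ a b, C a → C b → C (a + b)) : C x := by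
  rw [iSup_subtype'] at hx
  exact Submodule.iSup_induction (motive := C) _ hx (fun i y hy => hp i i.2 y hy) h0 hadd

theorem mem_bracketSpan {M N : Submodule F L} {m n : L} (hm : m ∈ M) (hn : n ∈ N) :
    ⁅m, n⁆ ∈ WG.bracketSpan F L M N :=
  Submodule.subset_span ⟨m, hm, n, hn, rfl⟩

theorem bracketSpan_le {M N : Submodule F L} {P : Submodule F L}
    (h : ∀ m ∈ M, ∀ n ∈ N, ⁅m, n⁆ ∈ P) : WG.bracketSpan F L M N ≤ P := by
  rw [WG.bracketSpan, Submodule.span_le]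
  rintro z ⟨m, hm, n, hn, rfl⟩
  exact h m hm n hn

theorem bracketSpan_mono {M N M' N' : Submodule F L} (hM : M ≤ M') (hN : N ≤ N') :
    WG.bracketSpan F L M N ≤ WG.bracketSpan F L M' N' :=
  bracketSpan_le fun m hm n hn => mem_bracketSpan (hM hm) (hN hn)

theorem bracketSpan_sup_right {M N N' : Submodule F L} :
    WG.bracketSpan F L M (N ⊔ N') ≤ WG.bracketSpan F L M N ⊔ WG.bracketSpan F L M N' := by
  refine bracketSpan_le fun m hm n hn => ?_
  obtain ⟨a, ha, b, hb, rfl⟩ := Submodule.mem_sup.mp hn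
  rw [lie_add]
  exact add_mem (le_sup_left (α := Submodule F L) (mem_bracketSpan hm ha))
    (le_sup_right (α := Submodule F L) (mem_bracketSpan hm hb))

/-- Independence of weight spaces (finset version). -/
theorem wt_inf_biSup_finset (T : Finset (Module.Dual F H)) :
    ∀ β ∉ T, WG.wt F L H β ⊓ (⨆ α ∈ T, WG.wt F L H α) = ⊥ := by
  classical
  induction T using Finset.induction_on with
  | empty => intro β _; simp
  | @insert a s ha ih =>
    intro β hβ
    have hβa : β ≠ a := fun h => hβ (h ▸ Finset.mem_insert_self a s)
    have hβs : β ∉ s := fun h => hβ (Finset.mem_insert_of_mem h)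
    rw [Finset.iSup_insert, eq_bot_iff]
    intro x hx
    obtain ⟨hxβ, hxsum⟩ := Submodule.mem_inf.mp hx
    obtain ⟨y, hy, z, hz, hyz⟩ := Submodule.mem_sup.mp hxsum
    have hex : ∃ h0 : H, β h0 ≠ a h0 := by
      by_contra hc
      push_neg at hc
      exact hβa (LinearMap.ext hc)
    obtain ⟨h0, hh0⟩ := hex
    have hcne : β h0 - a h0 ≠ 0 := sub_ne_zero.mpr hh0
    have hzmem : ⁅(h0 : L), z⁆ ∈ ⨆ α ∈ (s : Finset _), WG.wt F L H α := by
      refine biSup_induction (C := fun w => ⁅(h0 : L), w⁆ ∈ ⨆ α ∈ s, WG.wt F L H α)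
        (fun α => WG.wt F L H α) hz (fun α hα w hw => ?_) (by simp)
        (fun a b ha hb => by beta_reduce at ha hb ⊢; rw [lie_add]; exact add_mem ha hb)
      beta_reduce
      rw [hw h0]
      exact Submodule.mem_iSup_of_mem α (Submodule.mem_iSup_of_mem hα
        ((WG.wt F L H α).smul_mem _ hw))
    have hxz : (β h0 - a h0) • x = ⁅(h0 : L), z⁆ - a h0 • z := by
      have e1 : ⁅(h0 : L), x⁆ = β h0 • x := hxβ h0
      have e2 : ⁅(h0 : L), y⁆ = a h0 • y := hy h0
      rw [sub_smul, ← e1, ← hyz, lie_add, e2, smul_add]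
      abel
    have hmem2 : (β h0 - a h0) • x ∈ WG.wt F L H β ⊓ (⨆ α ∈ (s : Finset _), WG.wt F L H α) :=
      Submodule.mem_inf.mpr ⟨Submodule.smul_mem _ _ hxβ,
        by rw [hxz]; exact sub_mem hzmem (Submodule.smul_mem _ _ hz)⟩
    rw [ih β hβs] at hmem2
    rcases smul_eq_zero.mp ((Submodule.mem_bot F).mp hmem2) with h | h
    · exact absurd h hcne
    · exact (Submodule.mem_bot F).mpr h

theorem biSup_set_eq_finset {ι : Type*} {S : Set ι} (hS : S.Finite) (f : ι → Submodule F L) :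
    (⨆ α ∈ S, f α) = ⨆ α ∈ hS.toFinset, f α := by
  apply le_antisymm
  · exact iSup₂_le fun α hα => le_iSup₂ (f := fun α _ => f α) α (hS.mem_toFinset.mpr hα)
  · exact iSup₂_le fun α hα => le_iSup₂ (f := fun α _ => f α) α (hS.mem_toFinset.mp hα)

/-- Independence of weight spaces (finite set version). -/
theorem wt_inf_biSup_set {S : Set (Module.Dual F H)} (hS : S.Finite) {β : Module.Dual F H}
    (hβ : β ∉ S) : WG.wt F L H β ⊓ (⨆ α ∈ S, WG.wt F L H α) = ⊥ := by
  rw [biSup_set_eq_finset hS]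
  exact wt_inf_biSup_finset hS.toFinset β (by simpa using hβ)

end Aux

section Nilp

variable {F : Type*} [Field F] {L : Type*} [LieRing L] [LieAlgebra F L]

/-- Iterated bracket span `[P, [P, [P, ...]]]`. -/
def brIter (P : Submodule F L) : ℕ → Submodule F L
  | 0 => P
  | (k+1) => WG.bracketSpan F L P (brIter P k)

theorem exists_brIter_eq_bot (H : LieSubalgebra F L) (hnil : LieRing.IsNilpotent H) :
    ∃ k, brIter H.toSubmodule k = ⊥ := by
  obtain ⟨k, hk⟩ := (LieModule.isNilpotent_iff F H H).mp hnil
  refine ⟨k, le_bot_iff.mp ?_⟩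
  have hmap : ∀ j, brIter H.toSubmodule j ≤
      Submodule.map H.incl.toLinearMap
        (LieModule.lowerCentralSeries F H H j).toSubmodule := by
    intro j
    induction j with
    | zero =>
      intro x hx
      exact ⟨⟨x, hx⟩, by simp [LieModule.lowerCentralSeries_zero], rfl⟩
    | succ j ih =>
      refine bracketSpan_le fun m hm n hn => ?_
      obtain ⟨n', hn', rfl⟩ := ih hn
      refine ⟨⁅(⟨m, hm⟩ : H), n'⁆, ?_, rfl⟩
      show ⁅(⟨m, hm⟩ : H), n'⁆ ∈ LieModule.lowerCentralSeries F H H (j + 1)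
      rw [LieModule.lowerCentralSeries_succ]
      exact LieSubmodule.lie_mem_lie (LieSubmodule.mem_top _) hn'
  refine (hmap k).trans ?_
  rw [hk]
  rw [show ((⊥ : LieSubmodule F H H)).toSubmodule = (⊥ : Submodule F H) from rfl,
    Submodule.map_bot]

end Nilp

/-- Let `g` be a split simple subalgebra of a Lie algebra `L` and
suppose `L` is `(Γ, g)`-pregraded.  Then the following are equivalent:
(1) `L` is `(Γ, g)`-graded;
(2) `L_0 = Σ_{α,-α ∈ Γ\{0}} ⁅L_α, L_{-α}⁆`;
(3) `L = ⨁_{α ∈ Γ\{0}} L_α + Σ_{α,-α ∈ Γ\{0}} ⁅L_α, L_{-α}⁆`;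
(4) the ideal of `L` generated by `g` is all of `L`. -/
theorem stmt2 {F : Type*} [Field F] [CharZero F]
    {L : Type*} [LieRing L] [LieAlgebra F L]
    (g H : LieSubalgebra F L)
    [LieAlgebra.IsSimple F g] [FiniteDimensional F g]
    (hsplit : WG.IsSplitIn F L g H)
    (Γ : Set (Module.Dual F H))
    (hpre : WG.IsPregraded F L ⊤ g H Γ) :
    [WG.IsGraded F L ⊤ g H Γ,
     WG.wt F L H 0 = WG.zeroPart F L ⊤ H Γ,
     (⊤ : Submodule F L) = (⨆ α ∈ Γ \ {0}, WG.wt F L H α) ⊔ WG.zeroPart F L ⊤ H Γ,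
     LieSubmodule.lieSpan F L (g : Set L) = ⊤].TFAE := by
  classical
  obtain ⟨hgN, hcartan, hΓfin, h0Γ, hroots, hdec⟩ := id hpre
  have htopS : ((⊤ : LieSubalgebra F L).toSubmodule) = (⊤ : Submodule F L) := rfl
  rw [htopS] at hdec
  simp only [inf_top_eq] at hdec
  -- hdec : (⊤ : Submodule F L) = ⨆ α ∈ Γ, WG.wt F L H α
  set K : Submodule F L := WG.zeroPart F L ⊤ H Γ with hKdef
  set S1 : Submodule F L := ⨆ α ∈ Γ \ {0}, WG.wt F L H α with hS1def
  have hKeq : K = ⨆ α ∈ {α ∈ Γ | α ≠ 0 ∧ -α ∈ Γ},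
      WG.bracketSpan F L (WG.wt F L H α) (WG.wt F L H (-α)) := by
    rw [hKdef, WG.zeroPart]
    simp only [htopS, inf_top_eq]
  -- weight spaces for weights outside Γ vanish
  have hwtbot : ∀ γ, γ ∉ Γ → WG.wt F L H γ = (⊥ : Submodule F L) := by
    intro γ hγ
    have h := wt_inf_biSup_set (L := L) hΓfin hγ
    rwa [← hdec, inf_top_eq] at h
  -- the zero part is contained in the zero weight space
  have hK0 : K ≤ WG.wt F L H 0 := by
    rw [hKeq]
    refine iSup₂_le fun α hα => bracketSpan_le fun m hm n hn => ?_
    have h := lie_mem_wt hm hn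
    rwa [add_neg_cancel] at h
  have hS1wt0 : S1 ⊓ WG.wt F L H 0 = ⊥ := by
    rw [inf_comm, hS1def]
    exact wt_inf_biSup_set (hΓfin.subset Set.diff_subset) (fun h => h.2 rfl)
  -- the submodule S1 ⊔ K is an ideal of L
  have hidl : ∀ x m : L, m ∈ S1 ⊔ K → ⁅x, m⁆ ∈ S1 ⊔ K := by
    have key : ∀ β ∈ Γ, ∀ x ∈ WG.wt F L H β, ∀ m ∈ S1 ⊔ K, ⁅x, m⁆ ∈ S1 ⊔ K := by
      intro β hβ x hx m hm
      obtain ⟨m1, hm1, m2, hm2, rfl⟩ := Submodule.mem_sup.mp hm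
      rw [lie_add]
      refine add_mem ?_ ?_
      · rw [hS1def] at hm1
        refine biSup_induction (C := fun w => ⁅x, w⁆ ∈ S1 ⊔ K) (fun α => WG.wt F L H α) hm1
          ?_ (by beta_reduce; rw [lie_zero]; exact zero_mem _)
          (fun a b ha hb => by beta_reduce at ha hb ⊢; rw [lie_add]; exact add_mem ha hb)
        intro α hα w hw
        beta_reduce
        by_cases h1 : β + α = 0
        · have hβ0 : β ≠ 0 := by
            rintro rfl
            rw [zero_add] at h1
            exact hα.2 h1
          have hαβ : α = -β := by
            have := eq_neg_of_add_eq_zero_right h1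
            exact this
          refine Submodule.mem_sup_right ?_
          rw [hKeq]
          refine Submodule.mem_iSup_of_mem β (Submodule.mem_iSup_of_mem
            ⟨hβ, hβ0, hαβ ▸ hα.1⟩ ?_)
          exact mem_bracketSpan hx (hαβ ▸ hw)
        · by_cases h2 : β + α ∈ Γ
          · refine Submodule.mem_sup_left ?_
            rw [hS1def]
            exact Submodule.mem_iSup_of_mem (β + α)
              (Submodule.mem_iSup_of_mem ⟨h2, h1⟩ (lie_mem_wt hx hw))
          · have hb := hwtbot _ h2
            have : ⁅x, w⁆ ∈ (⊥ : Submodule F L) := hb ▸ lie_mem_wt hx hw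
            rw [(Submodule.mem_bot F).mp this]
            exact zero_mem _
      · rw [hKeq] at hm2
        refine biSup_induction (C := fun w => ⁅x, w⁆ ∈ S1 ⊔ K)
          (fun α => WG.bracketSpan F L (WG.wt F L H α) (WG.wt F L H (-α))) hm2
          ?_ (by beta_reduce; rw [lie_zero]; exact zero_mem _)
          (fun a b ha hb => by beta_reduce at ha hb ⊢; rw [lie_add]; exact add_mem ha hb)
        intro α hα y hy
        beta_reduce
        refine Submodule.span_induction (p := fun w _ => ⁅x, w⁆ ∈ S1 ⊔ K) ?_
          (by beta_reduce; rw [lie_zero]; exact zero_mem _)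
          (fun a b _ _ ha hb => by beta_reduce; rw [lie_add]; exact add_mem ha hb)
          (fun c a _ ha => by beta_reduce; rw [lie_smul]; exact Submodule.smul_mem _ c ha) hy
        rintro w ⟨p, hp, q, hq, rfl⟩
        by_cases hβ0 : β = 0
        · subst hβ0
          rw [leibniz_lie]
          refine add_mem (Submodule.mem_sup_right ?_) (Submodule.mem_sup_right ?_)
          · rw [hKeq]
            refine Submodule.mem_iSup_of_mem α (Submodule.mem_iSup_of_mem hα ?_)
            have h1 : ⁅x, p⁆ ∈ WG.wt F L H (0 + α) := lie_mem_wt hx hp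
            rw [zero_add] at h1
            exact mem_bracketSpan h1 hq
          · rw [hKeq]
            refine Submodule.mem_iSup_of_mem α (Submodule.mem_iSup_of_mem hα ?_)
            have h1 : ⁅x, q⁆ ∈ WG.wt F L H (0 + -α) := lie_mem_wt hx hq
            rw [zero_add] at h1
            exact mem_bracketSpan hp h1
        · refine Submodule.mem_sup_left ?_
          rw [hS1def]
          have h1 : ⁅p, q⁆ ∈ WG.wt F L H 0 := by
            have := lie_mem_wt hp hq
            rwa [add_neg_cancel] at this
          have h2 : ⁅x, ⁅p, q⁆⁆ ∈ WG.wt F L H β := by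
            have := lie_mem_wt hx h1
            rwa [add_zero] at this
          exact Submodule.mem_iSup_of_mem β (Submodule.mem_iSup_of_mem ⟨hβ, hβ0⟩ h2)
    intro x m hm
    have hx : x ∈ ⨆ α ∈ Γ, WG.wt F L H α := hdec ▸ Submodule.mem_top
    exact biSup_induction (C := fun w => ⁅w, m⁆ ∈ S1 ⊔ K) (fun α => WG.wt F L H α) hx
      (fun β hβ w hw => key β hβ w hw m hm)
      (by beta_reduce; rw [zero_lie]; exact zero_mem _)
      (fun a b ha hb => by beta_reduce at ha hb ⊢; rw [add_lie]; exact add_mem ha hb)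
  -- nonzero weight spaces lie in the ideal generated by g
  have hwtle : ∀ (α : Module.Dual F H), α ≠ 0 → ∀ x ∈ WG.wt F L H α,
      x ∈ LieSubmodule.lieSpan F L (g : Set L) := by
    intro α hα x hx
    obtain ⟨h0, hh0⟩ : ∃ h0 : H, α h0 ≠ 0 := by
      by_contra hc
      push_neg at hc
      exact hα (LinearMap.ext hc)
    have hx0 : x = (α h0)⁻¹ • ⁅(h0 : L), x⁆ := by
      rw [hx h0, smul_smul, inv_mul_cancel₀ hh0, one_smul]
    have hmem : (h0 : L) ∈ LieSubmodule.lieSpan F L (g : Set L) :=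
      LieSubmodule.subset_lieSpan (hcartan.1 h0.2)
    have h1 : ⁅x, (h0 : L)⁆ ∈ LieSubmodule.lieSpan F L (g : Set L) :=
      LieSubmodule.lie_mem _ hmem
    have h2 : ⁅(h0 : L), x⁆ ∈ LieSubmodule.lieSpan F L (g : Set L) := by
      rw [← lie_skew]
      exact neg_mem h1
    rw [hx0]
    exact Submodule.smul_mem ((LieSubmodule.lieSpan F L (g : Set L)) :
      Submodule F L) _ h2
  ------------------------------------------------------------------
  -- Step B: g ≤ S1 ⊔ K
  ------------------------------------------------------------------
  set H' : Submodule F L := WG.wt F L H 0 ⊓ g.toSubmodule with hH'def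
  set Gnz : Submodule F L := ⨆ α ∈ Γ \ {0}, (WG.wt F L H α ⊓ g.toSubmodule) with hGnzdef
  set Kg : Submodule F L := ⨆ α ∈ {α ∈ Γ | α ≠ 0 ∧ -α ∈ Γ},
      WG.bracketSpan F L (WG.wt F L H α ⊓ g.toSubmodule)
        (WG.wt F L H (-α) ⊓ g.toSubmodule) with hKgdef
  set BH : Submodule F L := WG.bracketSpan F L H' H' with hBHdef
  have hglie : ∀ {a b : L}, a ∈ g.toSubmodule → b ∈ g.toSubmodule →
      ⁅a, b⁆ ∈ g.toSubmodule := fun ha hb => g.lie_mem ha hb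
  have hgdec : g.toSubmodule ≤ H' ⊔ Gnz := by
    rw [hsplit.2]
    refine iSup_le fun α => ?_
    by_cases h0 : α = 0
    · subst h0; exact le_sup_left
    · by_cases hb : WG.wt F L H α ⊓ g.toSubmodule = ⊥
      · rw [hb]; exact bot_le
      · have hαΓ : α ∈ Γ := hroots ⟨h0, hb⟩
        refine le_trans ?_ le_sup_right
        rw [hGnzdef]
        exact le_iSup₂ (f := fun α _ => WG.wt F L H α ⊓ g.toSubmodule) α ⟨hαΓ, h0⟩
  have hH'H : H' ≤ H.toSubmodule := by
    rintro x ⟨hx0, hxg⟩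
    refine hcartan.2.2 x hxg (fun h hh => ?_)
    have h2 : ⁅h, x⁆ = 0 := by
      have := hx0 ⟨h, hh⟩
      simpa using this
    have h3 : ⁅x, h⁆ = (0 : L) := by rw [← lie_skew, h2, neg_zero]
    rw [h3]
    exact H.zero_mem
  -- perfectness of g
  have hperf : g.toSubmodule ≤ WG.bracketSpan F L g.toSubmodule g.toSubmodule := by
    have hder : LieAlgebra.derivedSeries F g 1 = ⊤ := by
      rcases LieAlgebra.IsSimple.eq_bot_or_eq_top (LieAlgebra.derivedSeries F g 1) with h | h
      · exfalso
        refine LieAlgebra.IsSimple.non_abelian (R := F) (L := g) ?_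
        constructor
        intro a b
        have hab : ⁅a, b⁆ ∈ LieAlgebra.derivedSeries F g 1 := by
          rw [LieAlgebra.derivedSeries_def, LieAlgebra.derivedSeriesOfIdeal_succ,
            LieAlgebra.derivedSeriesOfIdeal_zero]
          exact LieSubmodule.lie_mem_lie (LieSubmodule.mem_top _) (LieSubmodule.mem_top _)
        rw [h] at hab
        simpa using hab
      · exact h
    intro x hx
    have hx' : (⟨x, hx⟩ : g) ∈ LieAlgebra.derivedSeries F g 1 := by
      rw [hder]; exact LieSubmodule.mem_top _
    rw [LieAlgebra.derivedSeries_def, LieAlgebra.derivedSeriesOfIdeal_succ,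
      LieAlgebra.derivedSeriesOfIdeal_zero, ← LieSubmodule.mem_toSubmodule,
      LieSubmodule.lieIdeal_oper_eq_linear_span] at hx'
    have : ∀ z : g, z ∈ Submodule.span F
        {m : g | ∃ (a : (⊤ : LieIdeal F g)) (n : (⊤ : LieSubmodule F g g)),
          ⁅(a : g), (n : g)⁆ = m} →
        (z : L) ∈ WG.bracketSpan F L g.toSubmodule g.toSubmodule := by
      intro z hz
      refine Submodule.span_induction
        (p := fun (w : g) _ => (w : L) ∈ WG.bracketSpan F L g.toSubmodule g.toSubmodule)
        ?_ (by simp) (fun a b _ _ ha hb => by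
          beta_reduce; simpa using add_mem ha hb)
        (fun c a _ ha => by
          beta_reduce; simpa using Submodule.smul_mem
            (WG.bracketSpan F L g.toSubmodule g.toSubmodule) c ha) hz
      rintro w ⟨a, n, rfl⟩
      rw [LieSubalgebra.coe_bracket]
      exact mem_bracketSpan (a : g).2 (n : g).2
    exact this _ hx'
  -- bracket of g-elements lands in (Kg ⊔ BH) ⊔ Gnz
  have hC1 : WG.bracketSpan F L g.toSubmodule g.toSubmodule ≤ (Kg ⊔ BH) ⊔ Gnz := by
    have hcase : ∀ (β : Module.Dual F H), (β = 0 ∨ β ∈ Γ \ {0}) →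
        ∀ u ∈ WG.wt F L H β ⊓ g.toSubmodule,
        ∀ (α : Module.Dual F H), (α = 0 ∨ α ∈ Γ \ {0}) →
        ∀ v ∈ WG.wt F L H α ⊓ g.toSubmodule, ⁅u, v⁆ ∈ (Kg ⊔ BH) ⊔ Gnz := by
      rintro β hβ u ⟨huw, hug⟩ α hα v ⟨hvw, hvg⟩
      have hbrw : ⁅u, v⁆ ∈ WG.wt F L H (β + α) := lie_mem_wt huw hvw
      have hbrg : ⁅u, v⁆ ∈ g.toSubmodule := hglie hug hvg
      rcases hβ with rfl | hβ
      · rcases hα with rfl | hα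
        · refine Submodule.mem_sup_left (Submodule.mem_sup_right ?_)
          rw [hBHdef]
          exact mem_bracketSpan ⟨huw, hug⟩ ⟨hvw, hvg⟩
        · refine Submodule.mem_sup_right ?_
          rw [hGnzdef]
          rw [zero_add] at hbrw
          exact Submodule.mem_iSup_of_mem α
            (Submodule.mem_iSup_of_mem hα ⟨hbrw, hbrg⟩)
      · rcases hα with rfl | hα
        · refine Submodule.mem_sup_right ?_
          rw [hGnzdef]
          rw [add_zero] at hbrw
          exact Submodule.mem_iSup_of_mem β
            (Submodule.mem_iSup_of_mem hβ ⟨hbrw, hbrg⟩)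
        · by_cases h1 : β + α = 0
          · have hαβ : α = -β := eq_neg_of_add_eq_zero_right h1
            refine Submodule.mem_sup_left (Submodule.mem_sup_left ?_)
            rw [hKgdef]
            have hβ0 : β ≠ 0 := fun h => hβ.2 h
            have hnegβ : -β ∈ Γ := by rw [← hαβ]; exact hα.1
            refine Submodule.mem_iSup_of_mem β
              (Submodule.mem_iSup_of_mem ⟨hβ.1, hβ0, hnegβ⟩ ?_)
            exact mem_bracketSpan ⟨huw, hug⟩ ⟨by rwa [← hαβ], hvg⟩
          · by_cases h2 : β + α ∈ Γ
            · refine Submodule.mem_sup_right ?_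
              rw [hGnzdef]
              exact Submodule.mem_iSup_of_mem (β + α)
                (Submodule.mem_iSup_of_mem ⟨h2, h1⟩ ⟨hbrw, hbrg⟩)
            · have hb := hwtbot _ h2
              have : ⁅u, v⁆ ∈ (⊥ : Submodule F L) := hb ▸ hbrw
              rw [(Submodule.mem_bot F).mp this]
              exact zero_mem _
    have hOne : ∀ (β : Module.Dual F H), (β = 0 ∨ β ∈ Γ \ {0}) →
        ∀ u ∈ WG.wt F L H β ⊓ g.toSubmodule,
        ∀ v ∈ H' ⊔ Gnz, ⁅u, v⁆ ∈ (Kg ⊔ BH) ⊔ Gnz := by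
      intro β hβ u hu v hv
      obtain ⟨v0, hv0, v1, hv1, rfl⟩ := Submodule.mem_sup.mp hv
      rw [lie_add]
      refine add_mem (hcase β hβ u hu 0 (Or.inl rfl) v0 hv0) ?_
      rw [hGnzdef] at hv1
      exact biSup_induction (C := fun w => ⁅u, w⁆ ∈ (Kg ⊔ BH) ⊔ Gnz)
        (fun α => WG.wt F L H α ⊓ g.toSubmodule) hv1
        (fun α hα w hw => hcase β hβ u hu α (Or.inr hα) w hw)
        (by beta_reduce; rw [lie_zero]; exact zero_mem _)
        (fun a b ha hb => by beta_reduce at ha hb ⊢; rw [lie_add]; exact add_mem ha hb)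
    refine bracketSpan_le fun u hu v hv => ?_
    have hu' : u ∈ H' ⊔ Gnz := hgdec hu
    have hv' : v ∈ H' ⊔ Gnz := hgdec hv
    obtain ⟨u0, hu0, u1, hu1, rfl⟩ := Submodule.mem_sup.mp hu'
    rw [add_lie]
    refine add_mem (hOne 0 (Or.inl rfl) u0 hu0 v hv') ?_
    rw [hGnzdef] at hu1
    exact biSup_induction (C := fun w => ⁅w, v⁆ ∈ (Kg ⊔ BH) ⊔ Gnz)
      (fun α => WG.wt F L H α ⊓ g.toSubmodule) hu1
      (fun α hα w hw => hOne α (Or.inr hα) w hw v hv')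
      (by beta_reduce; rw [zero_lie]; exact zero_mem _)
      (fun a b ha hb => by beta_reduce at ha hb ⊢; rw [add_lie]; exact add_mem ha hb)
  -- Kg and BH are contained in the zero weight space
  have hKg0 : Kg ≤ WG.wt F L H 0 := by
    rw [hKgdef]
    refine iSup₂_le fun α hα => bracketSpan_le fun m hm n hn => ?_
    have h := lie_mem_wt hm.1 hn.1
    rwa [add_neg_cancel] at h
  have hBH0 : BH ≤ WG.wt F L H 0 := by
    rw [hBHdef]
    refine bracketSpan_le fun m hm n hn => ?_
    have h := lie_mem_wt hm.1 hn.1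
    rwa [add_zero] at h
  have hGnzS1 : Gnz ≤ S1 := by
    rw [hGnzdef, hS1def]
    exact iSup₂_mono fun α hα => inf_le_left
  have hGnz0 : Gnz ⊓ WG.wt F L H 0 = ⊥ := by
    rw [← le_bot_iff, ← hS1wt0]
    exact inf_le_inf_right _ hGnzS1
  -- the star inclusion : H' ≤ Kg ⊔ BH
  have hstar : H' ≤ Kg ⊔ BH := by
    intro x hx
    have hx2 : x ∈ WG.wt F L H 0 ⊓ ((Kg ⊔ BH) ⊔ Gnz) := ⟨hx.1, hC1 (hperf hx.2)⟩
    have hmod : WG.wt F L H 0 ⊓ ((Kg ⊔ BH) ⊔ Gnz) = Kg ⊔ BH := by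
      rw [inf_comm, sup_inf_assoc_of_le Gnz (sup_le hKg0 hBH0), hGnz0, sup_bot_eq]
    rwa [hmod] at hx2
  -- the bracket of H' with Kg stays in Kg
  have hE : WG.bracketSpan F L H' Kg ≤ Kg := by
    refine bracketSpan_le fun x hx u hu => ?_
    rw [hKgdef] at hu
    refine biSup_induction (C := fun w => ⁅x, w⁆ ∈ Kg)
      (fun α => WG.bracketSpan F L (WG.wt F L H α ⊓ g.toSubmodule)
        (WG.wt F L H (-α) ⊓ g.toSubmodule)) hu ?_
      (by beta_reduce; rw [lie_zero]; exact zero_mem _)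
      (fun a b ha hb => by beta_reduce at ha hb ⊢; rw [lie_add]; exact add_mem ha hb)
    intro α hα y hy
    beta_reduce
    refine Submodule.span_induction (p := fun w _ => ⁅x, w⁆ ∈ Kg) ?_
      (by beta_reduce; rw [lie_zero]; exact zero_mem _)
      (fun a b _ _ ha hb => by beta_reduce; rw [lie_add]; exact add_mem ha hb)
      (fun c a _ ha => by beta_reduce; rw [lie_smul]; exact Submodule.smul_mem _ c ha) hy
    rintro w ⟨p, hp, q, hq, rfl⟩
    rw [leibniz_lie]
    refine add_mem ?_ ?_
    · have h1 : ⁅x, p⁆ ∈ WG.wt F L H (0 + α) := lie_mem_wt hx.1 hp.1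
      rw [zero_add] at h1
      rw [hKgdef]
      exact Submodule.mem_iSup_of_mem α (Submodule.mem_iSup_of_mem hα
        (mem_bracketSpan ⟨h1, hglie hx.2 hp.2⟩ hq))
    · have h1 : ⁅x, q⁆ ∈ WG.wt F L H (0 + -α) := lie_mem_wt hx.1 hq.1
      rw [zero_add] at h1
      rw [hKgdef]
      exact Submodule.mem_iSup_of_mem α (Submodule.mem_iSup_of_mem hα
        (mem_bracketSpan hp ⟨h1, hglie hx.2 hq.2⟩))
  -- nilpotency : H' ≤ Kg
  have hH'Kg : H' ≤ Kg := by
    obtain ⟨k0, hk0⟩ := exists_brIter_eq_bot H hcartan.2.1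
    have hchain : ∀ k, H' ≤ Kg ⊔ brIter H.toSubmodule k := by
      intro k
      induction k with
      | zero => exact hH'H.trans le_sup_right
      | succ k ih =>
        refine hstar.trans (sup_le le_sup_left ?_)
        have h1 : BH ≤ WG.bracketSpan F L H' (Kg ⊔ brIter H.toSubmodule k) := by
          rw [hBHdef]
          exact bracketSpan_mono le_rfl ih
        refine h1.trans (bracketSpan_sup_right.trans (sup_le (hE.trans le_sup_left) ?_))
        refine le_trans (bracketSpan_mono hH'H le_rfl) ?_
        exact le_sup_right
    have := hchain k0
    rwa [hk0, sup_bot_eq] at this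
  have hKgK : Kg ≤ K := by
    rw [hKgdef, hKeq]
    exact iSup₂_mono fun α hα => bracketSpan_mono inf_le_left inf_le_left
  have hgM : g.toSubmodule ≤ S1 ⊔ K :=
    hgdec.trans (sup_le ((hH'Kg.trans hKgK).trans le_sup_right)
      (hGnzS1.trans le_sup_left))
  ------------------------------------------------------------------
  -- the TFAE chain
  ------------------------------------------------------------------
  tfae_have 1 ↔ 2 := by
    constructor
    · intro h1
      have h := h1.2
      rwa [htopS, inf_top_eq] at h
    · intro h2
      exact ⟨hpre, by rw [htopS, inf_top_eq]; exact h2⟩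
  tfae_have 2 → 3 := by
    intro h2
    refine le_antisymm ?_ le_top
    refine le_trans (le_of_eq hdec) (iSup₂_le fun α hα => ?_)
    by_cases h0 : α = 0
    · subst h0
      rw [h2]
      exact le_sup_right
    · refine le_trans ?_ le_sup_left
      rw [hS1def]
      exact le_iSup₂ (f := fun α _ => WG.wt F L H α) α ⟨hα, h0⟩
  tfae_have 3 → 4 := by
    intro h3
    rw [eq_top_iff]
    intro x _
    have hx : x ∈ S1 ⊔ K := h3 ▸ Submodule.mem_top
    obtain ⟨x1, hx1, x2, hx2, rfl⟩ := Submodule.mem_sup.mp hx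
    refine add_mem ?_ ?_
    · rw [hS1def] at hx1
      exact biSup_induction (C := fun w => w ∈ LieSubmodule.lieSpan F L (g : Set L))
        (fun α => WG.wt F L H α) hx1 (fun α hα w hw => hwtle α hα.2 w hw)
        (zero_mem _) (fun a b ha hb => add_mem ha hb)
    · rw [hKeq] at hx2
      refine biSup_induction (C := fun w => w ∈ LieSubmodule.lieSpan F L (g : Set L))
        (fun α => WG.bracketSpan F L (WG.wt F L H α) (WG.wt F L H (-α))) hx2
        ?_ (zero_mem _) (fun a b ha hb => add_mem ha hb)
      intro α hα y hy
      refine Submodule.span_induction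
        (p := fun w _ => w ∈ LieSubmodule.lieSpan F L (g : Set L)) ?_ (zero_mem _)
        (fun a b _ _ ha hb => add_mem ha hb)
        (fun c a _ ha => Submodule.smul_mem
          ((LieSubmodule.lieSpan F L (g : Set L)) : Submodule F L) c ha) hy
      rintro w ⟨p, hp, q, hq, rfl⟩
      have hpmem : p ∈ LieSubmodule.lieSpan F L (g : Set L) := hwtle α hα.2.1 p hp
      have h1 : ⁅q, p⁆ ∈ LieSubmodule.lieSpan F L (g : Set L) :=
        LieSubmodule.lie_mem _ hpmem
      rw [← lie_skew]
      exact neg_mem h1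
  tfae_have 4 → 3 := by
    intro h4
    let M' : LieSubmodule F L L :=
      { (S1 ⊔ K : Submodule F L) with
        lie_mem := fun {x m} hm => hidl x m hm }
    have hle : LieSubmodule.lieSpan F L (g : Set L) ≤ M' :=
      LieSubmodule.lieSpan_le.mpr (fun x hx => hgM hx)
    have htop : ∀ x : L, x ∈ S1 ⊔ K := by
      intro x
      have hx : x ∈ (⊤ : LieSubmodule F L L) := LieSubmodule.mem_top x
      rw [← h4] at hx
      exact hle hx
    exact (top_le_iff.mp (fun x _ => htop x)).symm
  tfae_have 3 → 2 := by
    intro h3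
    refine le_antisymm ?_ hK0
    intro x hx
    have hx2 : x ∈ WG.wt F L H 0 ⊓ (K ⊔ S1) :=
      ⟨hx, by rw [sup_comm]; exact h3 ▸ Submodule.mem_top⟩
    have hmod : WG.wt F L H 0 ⊓ (K ⊔ S1) = K := by
      rw [inf_comm, sup_inf_assoc_of_le S1 hK0, hS1wt0, sup_bot_eq]
    rwa [hmod] at hx2
  tfae_finish
end

section
/- Under the stated coordinate setup, 𝒜 = A⁻ ⊕ A⁺ is a unital associative subalgebra of the algebra 𝔞, i.e. 𝒜 is closed under the product α₁α₂ = ½[α₁,α₂] + ½(α₁∘α₂) and contains the identity 1⁺. -/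
namespace WG

variable (F : Type*) [Field F]
variable (L : Type*) [LieRing L] [LieAlgebra F L]

attribute [instance 100] LieRing.ofAssociativeRing

end WG
namespace WG

section WeightSets

variable {W : Type*} [AddCommGroup W] {r : ℕ}

/-- `{±δ_i ± δ_j | i ≠ j}`. -/
def pmSet (δ : Fin r → W) : Set W :=
  {α | ∃ i j, i ≠ j ∧
    (α = δ i + δ j ∨ α = δ i - δ j ∨ α = -δ i + δ j ∨ α = -δ i - δ j)}

/-- `{±δ_i}`. -/
def shortSet (δ : Fin r → W) : Set W :=
  {α | ∃ i, α = δ i ∨ α = -δ i}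

/-- `{±2δ_i}`. -/
def longSet (δ : Fin r → W) : Set W :=
  {α | ∃ i, α = δ i + δ i ∨ α = -(δ i + δ i)}

/-- The weight set `{0, ±δ_i ± δ_j, ±δ_i, ±2δ_i | i ≠ j}`.  For the weights
`ε_1, …, ε_{n+1}` of the natural `sl_{n+1}`-module this is the set `Â_n`; for a basis
`δ_1, …, δ_r` it is the set `BC_r ∪ {0}`. -/
def hatSet (δ : Fin r → W) : Set W :=
  {0} ∪ pmSet δ ∪ shortSet δ ∪ longSet δ

/-- The root system of type `A` in the weights `ε_i`: `{ε_i - ε_j | i ≠ j}`. -/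
def aRoots (ε : Fin r → W) : Set W :=
  {α | ∃ i j, i ≠ j ∧ α = ε i - ε j}

/-- The root system of type `B_r`: `{±δ_i ± δ_j, ±δ_i | i ≠ j}`. -/
def bRoots (δ : Fin r → W) : Set W := pmSet δ ∪ shortSet δ

/-- The root system of type `C_r`: `{±δ_i ± δ_j, ±2δ_i | i ≠ j}`. -/
def cRoots (δ : Fin r → W) : Set W := pmSet δ ∪ longSet δ

/-- The root system of type `D_r`: `{±δ_i ± δ_j | i ≠ j}`. -/
def dRoots (δ : Fin r → W) : Set W := pmSet δ

end WeightSets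

section MatrixModules

open Matrix

variable (F : Type*) [Field F] (m : ℕ)

/-- The symmetric `m × m` matrices. -/
def symM : Submodule F (Matrix (Fin m) (Fin m) F) where
  carrier := {x | xᵀ = x}
  add_mem' := by
    intro a b ha hb
    simp only [Set.mem_setOf_eq] at *
    simp [Matrix.transpose_add, ha, hb]
  zero_mem' := by simp
  smul_mem' := by
    intro c x hx
    simp only [Set.mem_setOf_eq] at *
    simp [Matrix.transpose_smul, hx]

/-- The skew-symmetric `m × m` matrices. -/
def skewM : Submodule F (Matrix (Fin m) (Fin m) F) where
  carrier := {x | xᵀ = -x}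
  add_mem' := by
    intro a b ha hb
    simp only [Set.mem_setOf_eq] at *
    simp [Matrix.transpose_add, ha, hb]
    abel
  zero_mem' := by simp
  smul_mem' := by
    intro c x hx
    simp only [Set.mem_setOf_eq] at *
    simp [Matrix.transpose_smul, hx]

variable {F m}

/-- The action `x.s = xs + sxᵗ` of `sl_m` on symmetric matrices. -/
def symAct (x : Matrix (Fin m) (Fin m) F) (s : symM F m) : symM F m :=
  ⟨x * s + (s : Matrix (Fin m) (Fin m) F) * xᵀ, by
    have hs : (s : Matrix (Fin m) (Fin m) F)ᵀ = s := s.2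
    show (x * (s : Matrix (Fin m) (Fin m) F) + (s : Matrix (Fin m) (Fin m) F) * xᵀ)ᵀ = _
    simp [Matrix.transpose_add, Matrix.transpose_mul, hs, add_comm]⟩

/-- `xs - sxᵗ` is skew-symmetric for `s` symmetric. -/
def symActSkew (x : Matrix (Fin m) (Fin m) F) (s : symM F m) : skewM F m :=
  ⟨x * s - (s : Matrix (Fin m) (Fin m) F) * xᵀ, by
    have hs : (s : Matrix (Fin m) (Fin m) F)ᵀ = s := s.2
    show (x * (s : Matrix (Fin m) (Fin m) F) - (s : Matrix (Fin m) (Fin m) F) * xᵀ)ᵀ = _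
    simp [Matrix.transpose_sub, Matrix.transpose_mul, hs, neg_sub]⟩

/-- The action `x.λ = xλ + λxᵗ` of `sl_m` on skew-symmetric matrices. -/
def skewAct (x : Matrix (Fin m) (Fin m) F) (l : skewM F m) : skewM F m :=
  ⟨x * l + (l : Matrix (Fin m) (Fin m) F) * xᵀ, by
    have hl : (l : Matrix (Fin m) (Fin m) F)ᵀ = -l := l.2
    show (x * (l : Matrix (Fin m) (Fin m) F) + (l : Matrix (Fin m) (Fin m) F) * xᵀ)ᵀ = _
    simp only [Matrix.transpose_add, Matrix.transpose_mul, Matrix.transpose_transpose, hl,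
      Matrix.neg_mul, Matrix.mul_neg, neg_add_rev]
    try abel⟩

/-- `xλ - λxᵗ` is symmetric for `λ` skew-symmetric. -/
def skewActSym (x : Matrix (Fin m) (Fin m) F) (l : skewM F m) : symM F m :=
  ⟨x * l - (l : Matrix (Fin m) (Fin m) F) * xᵀ, by
    have hl : (l : Matrix (Fin m) (Fin m) F)ᵀ = -l := l.2
    show (x * (l : Matrix (Fin m) (Fin m) F) - (l : Matrix (Fin m) (Fin m) F) * xᵀ)ᵀ = _
    simp only [Matrix.transpose_sub, Matrix.transpose_mul, Matrix.transpose_transpose, hl,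
      Matrix.neg_mul, Matrix.mul_neg, sub_neg_eq_add, neg_sub]
    try abel⟩

/-- `s'x + xᵗs'` (symmetric). -/
def symActR (s' : symM F m) (x : Matrix (Fin m) (Fin m) F) : symM F m :=
  ⟨(s' : Matrix (Fin m) (Fin m) F) * x + xᵀ * s', by
    have hs : (s' : Matrix (Fin m) (Fin m) F)ᵀ = s' := s'.2
    show ((s' : Matrix (Fin m) (Fin m) F) * x + xᵀ * (s' : Matrix (Fin m) (Fin m) F))ᵀ = _
    simp [Matrix.transpose_add, Matrix.transpose_mul, hs, add_comm]⟩

/-- `s'x - xᵗs'` (skew-symmetric). -/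
def symActRSkew (s' : symM F m) (x : Matrix (Fin m) (Fin m) F) : skewM F m :=
  ⟨(s' : Matrix (Fin m) (Fin m) F) * x - xᵀ * s', by
    have hs : (s' : Matrix (Fin m) (Fin m) F)ᵀ = s' := s'.2
    show ((s' : Matrix (Fin m) (Fin m) F) * x - xᵀ * (s' : Matrix (Fin m) (Fin m) F))ᵀ = _
    simp [Matrix.transpose_sub, Matrix.transpose_mul, hs, neg_sub]⟩

/-- `λ'x + xᵗλ'` (skew-symmetric). -/
def skewActR (l' : skewM F m) (x : Matrix (Fin m) (Fin m) F) : skewM F m :=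
  ⟨(l' : Matrix (Fin m) (Fin m) F) * x + xᵀ * l', by
    have hl : (l' : Matrix (Fin m) (Fin m) F)ᵀ = -l' := l'.2
    show ((l' : Matrix (Fin m) (Fin m) F) * x + xᵀ * (l' : Matrix (Fin m) (Fin m) F))ᵀ = _
    simp only [Matrix.transpose_add, Matrix.transpose_mul, Matrix.transpose_transpose, hl,
      Matrix.neg_mul, Matrix.mul_neg, neg_add_rev]
    try abel⟩

/-- `λ'x - xᵗλ'` (symmetric). -/
def skewActRSym (l' : skewM F m) (x : Matrix (Fin m) (Fin m) F) : symM F m :=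
  ⟨(l' : Matrix (Fin m) (Fin m) F) * x - xᵀ * l', by
    have hl : (l' : Matrix (Fin m) (Fin m) F)ᵀ = -l' := l'.2
    show ((l' : Matrix (Fin m) (Fin m) F) * x - xᵀ * (l' : Matrix (Fin m) (Fin m) F))ᵀ = _
    simp only [Matrix.transpose_sub, Matrix.transpose_mul, Matrix.transpose_transpose, hl,
      Matrix.neg_mul, Matrix.mul_neg, sub_neg_eq_add, neg_sub]
    try abel⟩

end MatrixModules

end WG
namespace WG

open Matrix

set_option maxHeartbeats 1000000

/-- `(n+1) × (n+1)` matrices over `F`. -/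
abbrev MatN (F : Type*) [Field F] (n : ℕ) := Matrix (Fin (n + 1)) (Fin (n + 1)) F

theorem nsucc_ne_zero (F : Type*) [Field F] [CharZero F] (n : ℕ) :
    ((n + 1 : ℕ) : F) ≠ 0 :=
  Nat.cast_ne_zero.mpr (Nat.succ_ne_zero n)

section CoordHelpers

variable {F : Type*} [Field F] [CharZero F] {n : ℕ}

/-- The trace-zero projection `m ↦ m - (tr m / (n+1)) • 1`. -/
def projSl (m : MatN F n) : slL F (n + 1) :=
  ⟨m - (Matrix.trace m / ((n + 1 : ℕ) : F)) • (1 : MatN F n), by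
    show Matrix.trace _ = 0
    rw [Matrix.trace_sub, Matrix.trace_smul, Matrix.trace_one, Fintype.card_fin,
      smul_eq_mul, div_mul_cancel₀ _ (nsucc_ne_zero F n), sub_self]⟩

/-- `x ∘ y = xy + yx - (2/(n+1)) tr(xy) • 1`. -/
def circSl (x y : slL F (n + 1)) : slL F (n + 1) :=
  projSl ((x : MatN F n) * (y : MatN F n) + (y : MatN F n) * (x : MatN F n))

/-- `(x | y) = tr(xy)/(n+1)`. -/
def traceF (x y : MatN F n) : F :=
  Matrix.trace (x * y) / ((n + 1 : ℕ) : F)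

/-- `uvᵗ + vuᵗ` (symmetric). -/
def symVV (u v : Fin (n + 1) → F) : symM F (n + 1) :=
  ⟨Matrix.vecMulVec u v + Matrix.vecMulVec v u, by
    show _ᵀ = _
    ext i j
    simp only [Matrix.transpose_apply, Matrix.add_apply, Matrix.vecMulVec_apply]
    ring⟩

/-- `uvᵗ - vuᵗ` (skew-symmetric). -/
def skewVV (u v : Fin (n + 1) → F) : skewM F (n + 1) :=
  ⟨Matrix.vecMulVec u v - Matrix.vecMulVec v u, by
    show _ᵀ = _
    ext i j
    simp only [Matrix.transpose_apply, Matrix.sub_apply, Matrix.vecMulVec_apply,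
      Matrix.neg_apply]
    ring⟩

end CoordHelpers

section TotalMap

open scoped TensorProduct

variable {F : Type*} [Field F] [CharZero F] {n : ℕ}
variable {A B B' C C' E E' D L : Type*}
variable [AddCommGroup A] [Module F A] [AddCommGroup B] [Module F B]
variable [AddCommGroup B'] [Module F B'] [AddCommGroup C] [Module F C]
variable [AddCommGroup C'] [Module F C'] [AddCommGroup E] [Module F E]
variable [AddCommGroup E'] [Module F E'] [AddCommGroup D] [Module F D]
variable [LieRing L] [LieAlgebra F L]

/-- The total linear map
`(g ⊗ A) × (V ⊗ B) × (V' ⊗ B') × (S ⊗ C) × (S' ⊗ C') × (Λ ⊗ E) × (Λ' ⊗ E') × D → L`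
assembled from the structure maps of the decomposition (1.1). -/
noncomputable def totalMap
    (ιg : slL F (n + 1) →ₗ[F] A →ₗ[F] L)
    (ιV : (Fin (n + 1) → F) →ₗ[F] B →ₗ[F] L)
    (ιV' : (Fin (n + 1) → F) →ₗ[F] B' →ₗ[F] L)
    (ιS : symM F (n + 1) →ₗ[F] C →ₗ[F] L)
    (ιS' : symM F (n + 1) →ₗ[F] C' →ₗ[F] L)
    (ιE : skewM F (n + 1) →ₗ[F] E →ₗ[F] L)
    (ιE' : skewM F (n + 1) →ₗ[F] E' →ₗ[F] L)
    (ιD : D →ₗ[F] L) :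
    ((↥(slL F (n + 1)) ⊗[F] A) × ((Fin (n + 1) → F) ⊗[F] B) × ((Fin (n + 1) → F) ⊗[F] B') ×
      (↥(symM F (n + 1)) ⊗[F] C) × (↥(symM F (n + 1)) ⊗[F] C') ×
      (↥(skewM F (n + 1)) ⊗[F] E) × (↥(skewM F (n + 1)) ⊗[F] E') × D) →ₗ[F] L :=
  (TensorProduct.lift ιg).coprod <| (TensorProduct.lift ιV).coprod <|
    (TensorProduct.lift ιV').coprod <| (TensorProduct.lift ιS).coprod <|
    (TensorProduct.lift ιS').coprod <| (TensorProduct.lift ιE).coprod <|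
    (TensorProduct.lift ιE').coprod ιD

end TotalMap

end WG
namespace WG

open Matrix

set_option maxHeartbeats 2000000

/-- The coordinate setup for an `Â_n`-graded Lie algebra `L` (for `n ≥ 6`, or
`n ∈ {4,5}` together with the conditions (1.2), which here appear as the fields
`zero_LL`, `zero_L'L'`, `zero_LV` and `zero_L'V'`):
`L = g⊗A ⊕ V⊗B ⊕ V'⊗B' ⊕ S⊗C ⊕ S'⊗C' ⊕ Λ⊗E ⊕ Λ'⊗E' ⊕ D` with `g = sl_{n+1}`,
with the Lie bracket of `L` given on the components by the formulas (5.1). -/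
structure CoordSetup (F : Type*) [Field F] [CharZero F] (n : ℕ)
    (A B B' C C' E E' D L : Type*)
    [AddCommGroup A] [Module F A] [AddCommGroup B] [Module F B]
    [AddCommGroup B'] [Module F B'] [AddCommGroup C] [Module F C]
    [AddCommGroup C'] [Module F C'] [AddCommGroup E] [Module F E]
    [AddCommGroup E'] [Module F E'] [AddCommGroup D] [Module F D]
    [LieRing L] [LieAlgebra F L] : Type _ where
  -- the bilinear products among the multiplicity spaces (Table 3)
  circA : A →ₗ[F] A →ₗ[F] A            -- `a₁ ∘ a₂`
  brA : A →ₗ[F] A →ₗ[F] A              -- `[a₁, a₂]`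
  dA : A →ₗ[F] A →ₗ[F] D               -- `⟨a₁, a₂⟩`
  pAB : A →ₗ[F] B →ₗ[F] B              -- `(a, b)_B`
  pB'A : B' →ₗ[F] A →ₗ[F] B'           -- `(b', a)_{B'}`
  pBB'A : B →ₗ[F] B' →ₗ[F] A           -- `(b, b')_A`
  dBB' : B →ₗ[F] B' →ₗ[F] D            -- `⟨b, b'⟩`
  pBBC : B →ₗ[F] B →ₗ[F] C             -- `(b₁, b₂)_C`
  pBBE : B →ₗ[F] B →ₗ[F] E             -- `(b₁, b₂)_E`
  pB'B'C' : B' →ₗ[F] B' →ₗ[F] C'       -- `(b₁', b₂')_{C'}`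
  pB'B'E' : B' →ₗ[F] B' →ₗ[F] E'       -- `(b₁', b₂')_{E'}`
  pACC : A →ₗ[F] C →ₗ[F] C             -- `(a, c)_C`
  pACE : A →ₗ[F] C →ₗ[F] E             -- `(a, c)_E`
  pAEE : A →ₗ[F] E →ₗ[F] E             -- `(a, e)_E`
  pAEC : A →ₗ[F] E →ₗ[F] C             -- `(a, e)_C`
  pC'AC' : C' →ₗ[F] A →ₗ[F] C'         -- `(c', a)_{C'}`
  pC'AE' : C' →ₗ[F] A →ₗ[F] E'         -- `(c', a)_{E'}`
  pE'AE' : E' →ₗ[F] A →ₗ[F] E'         -- `(e', a)_{E'}`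
  pE'AC' : E' →ₗ[F] A →ₗ[F] C'         -- `(e', a)_{C'}`
  pCC'A : C →ₗ[F] C' →ₗ[F] A           -- `(c, c')_A`
  dCC' : C →ₗ[F] C' →ₗ[F] D            -- `⟨c, c'⟩`
  pEE'A : E →ₗ[F] E' →ₗ[F] A           -- `(e, e')_A`
  dEE' : E →ₗ[F] E' →ₗ[F] D            -- `⟨e, e'⟩`
  pCE'A : C →ₗ[F] E' →ₗ[F] A           -- `(c, e')_A`
  pC'EA : C' →ₗ[F] E →ₗ[F] A           -- `(c', e)_A`
  pC'B : C' →ₗ[F] B →ₗ[F] B'           -- `(c', b)_{B'}`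
  pE'B : E' →ₗ[F] B →ₗ[F] B'           -- `(e', b)_{B'}`
  pB'C : B' →ₗ[F] C →ₗ[F] B            -- `(b', c)_B`
  pB'E : B' →ₗ[F] E →ₗ[F] B            -- `(b', e)_B`
  dActA : D →ₗ[F] A →ₗ[F] A            -- the action of `D` on `A`
  dActB : D →ₗ[F] B →ₗ[F] B
  dActB' : D →ₗ[F] B' →ₗ[F] B'
  dActC : D →ₗ[F] C →ₗ[F] C
  dActC' : D →ₗ[F] C' →ₗ[F] C'
  dActE : D →ₗ[F] E →ₗ[F] E
  dActE' : D →ₗ[F] E' →ₗ[F] E'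
  dD : D →ₗ[F] D →ₗ[F] D
  -- the distinguished element `1 ∈ A` with `g = g ⊗ 1`
  one : A
  -- the components of the decomposition (1.1), as bilinear maps into `L`
  ιg : slL F (n + 1) →ₗ[F] A →ₗ[F] L
  ιV : (Fin (n + 1) → F) →ₗ[F] B →ₗ[F] L
  ιV' : (Fin (n + 1) → F) →ₗ[F] B' →ₗ[F] L
  ιS : symM F (n + 1) →ₗ[F] C →ₗ[F] L
  ιS' : symM F (n + 1) →ₗ[F] C' →ₗ[F] L
  ιE : skewM F (n + 1) →ₗ[F] E →ₗ[F] L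
  ιE' : skewM F (n + 1) →ₗ[F] E' →ₗ[F] L
  ιD : D →ₗ[F] L
  -- the decomposition (1.1) is a direct sum decomposition of `L`
  bij : Function.Bijective (totalMap ιg ιV ιV' ιS ιS' ιE ιE' ιD)
  -- the multiplication formulas (5.1)
  rel_gg : ∀ (x y : slL F (n + 1)) (a₁ a₂ : A),
    ⁅ιg x a₁, ιg y a₂⁆ =
      ιg (circSl x y) ((2⁻¹ : F) • brA a₁ a₂) + ιg ⁅x, y⁆ ((2⁻¹ : F) • circA a₁ a₂) +
        ιD (traceF (x : MatN F n) (y : MatN F n) • dA a₁ a₂)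
  rel_VV' : ∀ (u v' : Fin (n + 1) → F) (b : B) (b' : B'),
    ⁅ιV u b, ιV' v' b'⁆ =
      ιg (projSl (Matrix.vecMulVec u v')) (pBB'A b b') +
        ιD ((Matrix.trace (Matrix.vecMulVec u v') / ((n + 1 : ℕ) : F)) • dBB' b b')
  rel_SS' : ∀ (s s' : symM F (n + 1)) (c : C) (c' : C'),
    ⁅ιS s c, ιS' s' c'⁆ =
      ιg (projSl ((s : MatN F n) * (s' : MatN F n))) (pCC'A c c') +
        ιD (traceF (s : MatN F n) (s' : MatN F n) • dCC' c c')
  rel_LL' : ∀ (l l' : skewM F (n + 1)) (e : E) (e' : E'),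
    ⁅ιE l e, ιE' l' e'⁆ =
      ιg (projSl ((l : MatN F n) * (l' : MatN F n))) (pEE'A e e') +
        ιD (traceF (l : MatN F n) (l' : MatN F n) • dEE' e e')
  rel_VV : ∀ (u v : Fin (n + 1) → F) (b₁ b₂ : B),
    ⁅ιV u b₁, ιV v b₂⁆ =
      ιS (symVV u v) ((2⁻¹ : F) • pBBC b₁ b₂) + ιE (skewVV u v) ((2⁻¹ : F) • pBBE b₁ b₂)
  rel_V'V' : ∀ (u' v' : Fin (n + 1) → F) (b₁' b₂' : B'),
    ⁅ιV' u' b₁', ιV' v' b₂'⁆ =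
      ιS' (symVV u' v') ((2⁻¹ : F) • pB'B'C' b₁' b₂') +
        ιE' (skewVV u' v') ((2⁻¹ : F) • pB'B'E' b₁' b₂')
  rel_gS : ∀ (x : slL F (n + 1)) (a : A) (s : symM F (n + 1)) (c : C),
    ⁅ιg x a, ιS s c⁆ =
      ιS (symAct (x : MatN F n) s) ((2⁻¹ : F) • pACC a c) +
        ιE (symActSkew (x : MatN F n) s) ((2⁻¹ : F) • pACE a c)
  rel_gL : ∀ (x : slL F (n + 1)) (a : A) (l : skewM F (n + 1)) (e : E),
    ⁅ιg x a, ιE l e⁆ =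
      ιE (skewAct (x : MatN F n) l) ((2⁻¹ : F) • pAEE a e) +
        ιS (skewActSym (x : MatN F n) l) ((2⁻¹ : F) • pAEC a e)
  rel_S'g : ∀ (s' : symM F (n + 1)) (c' : C') (x : slL F (n + 1)) (a : A),
    ⁅ιS' s' c', ιg x a⁆ =
      ιS' (symActR s' (x : MatN F n)) ((2⁻¹ : F) • pC'AC' c' a) +
        ιE' (symActRSkew s' (x : MatN F n)) ((2⁻¹ : F) • pC'AE' c' a)
  rel_L'g : ∀ (l' : skewM F (n + 1)) (e' : E') (x : slL F (n + 1)) (a : A),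
    ⁅ιE' l' e', ιg x a⁆ =
      ιE' (skewActR l' (x : MatN F n)) ((2⁻¹ : F) • pE'AE' e' a) +
        ιS' (skewActRSym l' (x : MatN F n)) ((2⁻¹ : F) • pE'AC' e' a)
  rel_SL' : ∀ (s : symM F (n + 1)) (c : C) (l' : skewM F (n + 1)) (e' : E'),
    ⁅ιS s c, ιE' l' e'⁆ = ιg (projSl ((s : MatN F n) * (l' : MatN F n))) (pCE'A c e')
  rel_S'L : ∀ (s' : symM F (n + 1)) (c' : C') (l : skewM F (n + 1)) (e : E),
    ⁅ιS' s' c', ιE l e⁆ = ιg (projSl ((s' : MatN F n) * (l : MatN F n))) (pC'EA c' e)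
  rel_gV : ∀ (x : slL F (n + 1)) (a : A) (u : Fin (n + 1) → F) (b : B),
    ⁅ιg x a, ιV u b⁆ = ιV ((x : MatN F n) *ᵥ u) (pAB a b)
  rel_S'V : ∀ (s' : symM F (n + 1)) (c' : C') (u : Fin (n + 1) → F) (b : B),
    ⁅ιS' s' c', ιV u b⁆ = ιV' ((s' : MatN F n) *ᵥ u) (pC'B c' b)
  rel_L'V : ∀ (l' : skewM F (n + 1)) (e' : E') (u : Fin (n + 1) → F) (b : B),
    ⁅ιE' l' e', ιV u b⁆ = ιV' ((l' : MatN F n) *ᵥ u) (pE'B e' b)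
  rel_V'g : ∀ (u' : Fin (n + 1) → F) (b' : B') (x : slL F (n + 1)) (a : A),
    ⁅ιV' u' b', ιg x a⁆ = ιV' ((x : MatN F n)ᵀ *ᵥ u') (pB'A b' a)
  rel_V'S : ∀ (u' : Fin (n + 1) → F) (b' : B') (s : symM F (n + 1)) (c : C),
    ⁅ιV' u' b', ιS s c⁆ = ιV ((s : MatN F n) *ᵥ u') (pB'C b' c)
  rel_V'L : ∀ (u' : Fin (n + 1) → F) (b' : B') (l : skewM F (n + 1)) (e : E),
    ⁅ιV' u' b', ιE l e⁆ = -ιV ((l : MatN F n) *ᵥ u') (pB'E b' e)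
  -- the action of `D`
  rel_Dg : ∀ (d : D) (x : slL F (n + 1)) (a : A), ⁅ιD d, ιg x a⁆ = ιg x (dActA d a)
  rel_DV : ∀ (d : D) (u : Fin (n + 1) → F) (b : B), ⁅ιD d, ιV u b⁆ = ιV u (dActB d b)
  rel_DV' : ∀ (d : D) (u' : Fin (n + 1) → F) (b' : B'),
    ⁅ιD d, ιV' u' b'⁆ = ιV' u' (dActB' d b')
  rel_DS : ∀ (d : D) (s : symM F (n + 1)) (c : C), ⁅ιD d, ιS s c⁆ = ιS s (dActC d c)
  rel_DS' : ∀ (d : D) (s' : symM F (n + 1)) (c' : C'),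
    ⁅ιD d, ιS' s' c'⁆ = ιS' s' (dActC' d c')
  rel_DL : ∀ (d : D) (l : skewM F (n + 1)) (e : E), ⁅ιD d, ιE l e⁆ = ιE l (dActE d e)
  rel_DL' : ∀ (d : D) (l' : skewM F (n + 1)) (e' : E'),
    ⁅ιD d, ιE' l' e'⁆ = ιE' l' (dActE' d e')
  rel_DD : ∀ d₁ d₂ : D, ⁅ιD d₁, ιD d₂⁆ = ιD (dD d₁ d₂)
  -- all other products of homogeneous components are zero
  zero_SS : ∀ (s t : symM F (n + 1)) (c₁ c₂ : C), ⁅ιS s c₁, ιS t c₂⁆ = 0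
  zero_SL : ∀ (s : symM F (n + 1)) (c : C) (l : skewM F (n + 1)) (e : E),
    ⁅ιS s c, ιE l e⁆ = 0
  zero_LL : ∀ (l₁ l₂ : skewM F (n + 1)) (e₁ e₂ : E), ⁅ιE l₁ e₁, ιE l₂ e₂⁆ = 0
  zero_S'S' : ∀ (s' t' : symM F (n + 1)) (c₁' c₂' : C'), ⁅ιS' s' c₁', ιS' t' c₂'⁆ = 0
  zero_S'L' : ∀ (s' : symM F (n + 1)) (c' : C') (l' : skewM F (n + 1)) (e' : E'),
    ⁅ιS' s' c', ιE' l' e'⁆ = 0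
  zero_L'L' : ∀ (l₁' l₂' : skewM F (n + 1)) (e₁' e₂' : E'),
    ⁅ιE' l₁' e₁', ιE' l₂' e₂'⁆ = 0
  zero_SV : ∀ (s : symM F (n + 1)) (c : C) (u : Fin (n + 1) → F) (b : B),
    ⁅ιS s c, ιV u b⁆ = 0
  zero_LV : ∀ (l : skewM F (n + 1)) (e : E) (u : Fin (n + 1) → F) (b : B),
    ⁅ιE l e, ιV u b⁆ = 0
  zero_S'V' : ∀ (s' : symM F (n + 1)) (c' : C') (u' : Fin (n + 1) → F) (b' : B'),
    ⁅ιS' s' c', ιV' u' b'⁆ = 0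
  zero_L'V' : ∀ (l' : skewM F (n + 1)) (e' : E') (u' : Fin (n + 1) → F) (b' : B'),
    ⁅ιE' l' e', ιV' u' b'⁆ = 0
  -- `g = g ⊗ 1`: the subalgebra `g` acts through the distinguished element `1 ∈ A`
  one_gg : ∀ (x y : slL F (n + 1)) (a : A), ⁅ιg x one, ιg y a⁆ = ιg ⁅x, y⁆ a
  one_gV : ∀ (x : slL F (n + 1)) (u : Fin (n + 1) → F) (b : B),
    ⁅ιg x one, ιV u b⁆ = ιV ((x : MatN F n) *ᵥ u) b
  one_gV' : ∀ (x : slL F (n + 1)) (u' : Fin (n + 1) → F) (b' : B'),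
    ⁅ιg x one, ιV' u' b'⁆ = -ιV' ((x : MatN F n)ᵀ *ᵥ u') b'
  one_gS : ∀ (x : slL F (n + 1)) (s : symM F (n + 1)) (c : C),
    ⁅ιg x one, ιS s c⁆ = ιS (symAct (x : MatN F n) s) c
  one_gL : ∀ (x : slL F (n + 1)) (l : skewM F (n + 1)) (e : E),
    ⁅ιg x one, ιE l e⁆ = ιE (skewAct (x : MatN F n) l) e
  one_gS' : ∀ (x : slL F (n + 1)) (s' : symM F (n + 1)) (c' : C'),
    ⁅ιg x one, ιS' s' c'⁆ = -ιS' (symActR s' (x : MatN F n)) c'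
  one_gL' : ∀ (x : slL F (n + 1)) (l' : skewM F (n + 1)) (e' : E'),
    ⁅ιg x one, ιE' l' e'⁆ = -ιE' (skewActR l' (x : MatN F n)) e'

end WG
namespace WG

set_option maxHeartbeats 2000000

/-- The underlying space of the coordinate algebra `𝔞 = A⁺ ⊕ A⁻ ⊕ C ⊕ E ⊕ C' ⊕ E'`. -/
abbrev CoorA (A C E C' E' : Type*) := A × A × C × E × C' × E'

/-- The underlying space of the coordinate algebra
`𝔟 = 𝔞 ⊕ B ⊕ B' = A⁺ ⊕ A⁻ ⊕ C ⊕ E ⊕ C' ⊕ E' ⊕ B ⊕ B'`. -/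
abbrev CoorB (A C E C' E' B B' : Type*) := A × A × C × E × C' × E' × B × B'

section CoordAlgebra

variable {F : Type*} [Field F] [CharZero F] {n : ℕ}
variable {A B B' C C' E E' D L : Type*}
variable [AddCommGroup A] [Module F A] [AddCommGroup B] [Module F B]
variable [AddCommGroup B'] [Module F B'] [AddCommGroup C] [Module F C]
variable [AddCommGroup C'] [Module F C'] [AddCommGroup E] [Module F E]
variable [AddCommGroup E'] [Module F E'] [AddCommGroup D] [Module F D]
variable [LieRing L] [LieAlgebra F L]

/-- The multiplication `α₁α₂ = ½[α₁,α₂] + ½(α₁∘α₂)` of the coordinate algebra `𝔟`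
(Tables 4 and 5). -/
def bMul (S : CoordSetup F n A B B' C C' E E' D L) :
    CoorB A C E C' E' B B' → CoorB A C E C' E' B B' → CoorB A C E C' E' B B' :=
  fun x y =>
    match x, y with
    | (a1p, a1m, c1, e1, c1', e1', b1, b1'), (a2p, a2m, c2, e2, c2', e2', b2, b2') =>
      ((2⁻¹ : F) • (S.circA a1p a2p + S.circA a1m a2m + S.brA a1p a2m + S.brA a1m a2p +
          S.pCC'A c1 c2' + S.pCC'A c2 c1' + S.pEE'A e1 e2' + S.pEE'A e2 e1' +
          S.pCE'A c1 e2' - S.pCE'A c2 e1' + S.pC'EA c1' e2 - S.pC'EA c2' e1 +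
          S.pBB'A b1 b2' + S.pBB'A b2 b1'),
       (2⁻¹ : F) • (S.brA a1p a2p + S.brA a1m a2m + S.circA a1p a2m + S.circA a1m a2p +
          S.pCC'A c1 c2' - S.pCC'A c2 c1' + S.pEE'A e1 e2' - S.pEE'A e2 e1' +
          S.pCE'A c1 e2' + S.pCE'A c2 e1' + S.pC'EA c1' e2 + S.pC'EA c2' e1 +
          S.pBB'A b1 b2' - S.pBB'A b2 b1'),
       (2⁻¹ : F) • (S.pACC a1p c2 + S.pACC a1m c2 + S.pACC a2p c1 - S.pACC a2m c1 +
          S.pAEC a1p e2 + S.pAEC a1m e2 - S.pAEC a2p e1 + S.pAEC a2m e1 +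
          S.pBBC b1 b2),
       (2⁻¹ : F) • (S.pACE a1p c2 + S.pACE a1m c2 - S.pACE a2p c1 + S.pACE a2m c1 +
          S.pAEE a1p e2 + S.pAEE a1m e2 + S.pAEE a2p e1 - S.pAEE a2m e1 +
          S.pBBE b1 b2),
       (2⁻¹ : F) • (S.pC'AC' c1' a2m + S.pC'AC' c1' a2p - S.pC'AC' c2' a1m +
          S.pC'AC' c2' a1p + S.pE'AC' e1' a2m + S.pE'AC' e1' a2p + S.pE'AC' e2' a1m -
          S.pE'AC' e2' a1p + S.pB'B'C' b1' b2'),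
       (2⁻¹ : F) • (S.pC'AE' c1' a2m + S.pC'AE' c1' a2p + S.pC'AE' c2' a1m -
          S.pC'AE' c2' a1p + S.pE'AE' e1' a2m + S.pE'AE' e1' a2p - S.pE'AE' e2' a1m +
          S.pE'AE' e2' a1p + S.pB'B'E' b1' b2'),
       S.pAB a1p b2 + S.pAB a1m b2 + S.pAB a2p b1 - S.pAB a2m b1 +
         S.pB'C b1' c2 + S.pB'E b1' e2 - S.pB'C b2' c1 + S.pB'E b2' e1,
       S.pC'B c1' b2 + S.pE'B e1' b2 - S.pC'B c2' b1 + S.pE'B e2' b1 +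
         S.pB'A b1' a2p + S.pB'A b1' a2m + S.pB'A b2' a1p - S.pB'A b2' a1m)

/-- The multiplication of the coordinate algebra `𝔞` (Table 4): the restriction of the
multiplication of `𝔟`. -/
def aMul (S : CoordSetup F n A B B' C C' E E' D L) :
    CoorA A C E C' E' → CoorA A C E C' E' → CoorA A C E C' E' :=
  fun x y =>
    match x, y with
    | (a1p, a1m, c1, e1, c1', e1'), (a2p, a2m, c2, e2, c2', e2') =>
      ((2⁻¹ : F) • (S.circA a1p a2p + S.circA a1m a2m + S.brA a1p a2m + S.brA a1m a2p +
          S.pCC'A c1 c2' + S.pCC'A c2 c1' + S.pEE'A e1 e2' + S.pEE'A e2 e1' +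
          S.pCE'A c1 e2' - S.pCE'A c2 e1' + S.pC'EA c1' e2 - S.pC'EA c2' e1),
       (2⁻¹ : F) • (S.brA a1p a2p + S.brA a1m a2m + S.circA a1p a2m + S.circA a1m a2p +
          S.pCC'A c1 c2' - S.pCC'A c2 c1' + S.pEE'A e1 e2' - S.pEE'A e2 e1' +
          S.pCE'A c1 e2' + S.pCE'A c2 e1' + S.pC'EA c1' e2 + S.pC'EA c2' e1),
       (2⁻¹ : F) • (S.pACC a1p c2 + S.pACC a1m c2 + S.pACC a2p c1 - S.pACC a2m c1 +
          S.pAEC a1p e2 + S.pAEC a1m e2 - S.pAEC a2p e1 + S.pAEC a2m e1),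
       (2⁻¹ : F) • (S.pACE a1p c2 + S.pACE a1m c2 - S.pACE a2p c1 + S.pACE a2m c1 +
          S.pAEE a1p e2 + S.pAEE a1m e2 + S.pAEE a2p e1 - S.pAEE a2m e1),
       (2⁻¹ : F) • (S.pC'AC' c1' a2m + S.pC'AC' c1' a2p - S.pC'AC' c2' a1m +
          S.pC'AC' c2' a1p + S.pE'AC' e1' a2m + S.pE'AC' e1' a2p + S.pE'AC' e2' a1m -
          S.pE'AC' e2' a1p),
       (2⁻¹ : F) • (S.pC'AE' c1' a2m + S.pC'AE' c1' a2p + S.pC'AE' c2' a1m -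
          S.pC'AE' c2' a1p + S.pE'AE' e1' a2m + S.pE'AE' e1' a2p - S.pE'AE' e2' a1m +
          S.pE'AE' e2' a1p))

/-- The element `1⁺ ∈ 𝔞`. -/
def oneA (S : CoordSetup F n A B B' C C' E E' D L) : CoorA A C E C' E' :=
  (S.one, 0, 0, 0, 0, 0)

/-- The element `1⁺ ∈ 𝔟`. -/
def oneB (S : CoordSetup F n A B B' C C' E E' D L) : CoorB A C E C' E' B B' :=
  (S.one, 0, 0, 0, 0, 0, 0, 0)

/-- The linear transformation `γ` of `𝔞`: identity on `A⁺, E, E'` and `-1` on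
`A⁻, C, C'`. -/
def gammaA : CoorA A C E C' E' → CoorA A C E C' E' :=
  fun x => match x with
  | (ap, am, c, e, c', e') => (ap, -am, -c, e, -c', e')

/-- The linear transformation `η` of `𝔟`: it restricts to `γ` on `𝔞` and fixes `B` and
`B'`. -/
def etaB : CoorB A C E C' E' B B' → CoorB A C E C' E' B B' :=
  fun x => match x with
  | (ap, am, c, e, c', e', b, b') => (ap, -am, -c, e, -c', e', b, b')

/-- The embedding `𝔞 → 𝔟`. -/
def iaB : CoorA A C E C' E' → CoorB A C E C' E' B B' :=
  fun x => match x with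
  | (ap, am, c, e, c', e') => (ap, am, c, e, c', e', 0, 0)

/-- The element `b + b'` of `B ⊕ B' ⊆ 𝔟`. -/
def bElem (b : B) (b' : B') : CoorB A C E C' E' B B' :=
  (0, 0, 0, 0, 0, 0, b, b')

end CoordAlgebra

end WG
namespace WG

/-- The subspace `𝒜 = A⁺ ⊕ A⁻` of the coordinate algebra `𝔞`. -/
def Acal (A C E C' E' : Type*) [Zero C] [Zero E] [Zero C'] [Zero E'] :
    Set (CoorA A C E C' E') :=
  {x | x.2.2 = 0}

end WG

/-- Under the stated coordinate setup, `𝒜 = A⁻ ⊕ A⁺` is a unital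
associative subalgebra of the algebra `𝔞`, i.e. `𝒜` is closed under the product
`α₁α₂ = ½[α₁,α₂] + ½(α₁∘α₂)` and contains the identity `1⁺`. -/
theorem stmt13 {F : Type*} [Field F] [CharZero F] (n : ℕ) (hn : 4 ≤ n)
    {A B B' C C' E E' D L : Type*}
    [AddCommGroup A] [Module F A] [AddCommGroup B] [Module F B]
    [AddCommGroup B'] [Module F B'] [AddCommGroup C] [Module F C]
    [AddCommGroup C'] [Module F C'] [AddCommGroup E] [Module F E]
    [AddCommGroup E'] [Module F E'] [AddCommGroup D] [Module F D]
    [LieRing L] [LieAlgebra F L]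
    (S : WG.CoordSetup F n A B B' C C' E E' D L) :
    (∀ x ∈ WG.Acal A C E C' E', ∀ y ∈ WG.Acal A C E C' E',
      WG.aMul S x y ∈ WG.Acal A C E C' E') ∧
    WG.oneA S ∈ WG.Acal A C E C' E' := by
  constructor
  · rintro ⟨a1p, a1m, c1, e1, c1', e1'⟩ hx ⟨a2p, a2m, c2, e2, c2', e2'⟩ hy
    simp only [WG.Acal, Set.mem_setOf_eq, Prod.ext_iff, Prod.fst_zero, Prod.snd_zero] at hx hy ⊢
    obtain ⟨hc1, he1, hc1', he1'⟩ := hx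
    obtain ⟨hc2, he2, hc2', he2'⟩ := hy
    subst hc1 he1 hc1' he1' hc2 he2 hc2' he2'
    simp [WG.aMul]
  · simp [WG.Acal, WG.oneA]
end

section
/- Under the stated coordinate setup, let A carry the associative product aa' = ½(a∘a') + ½[a,a'] with unit 1, let A^op be its opposite algebra (written with elements aᵗ, a ∈ A), and let Ã = A ⊕ A^op (direct sum of ideals) with the exchange involution σ(a + bᵗ) = b + aᵗ. Then the map φ : Ã → 𝒜 = A⁻ ⊕ A⁺ defined by φ(a + aᵗ) = a⁺ and φ(a − aᵗ) = a⁻ is an isomorphism of algebras with involution, where 𝒜 carries the involution γ|_𝒜 (γ(a⁺) = a⁺, γ(a⁻) = −a⁻); in particular 𝒜 ≅ A ⊕ A^op as algebras with involution. -/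
attribute [local instance 100] LieRing.ofAssociativeRing


namespace WG

section Stmt14Defs

variable {F : Type*} [Field F] [CharZero F] {n : ℕ}
variable {A B B' C C' E E' D L : Type*}
variable [AddCommGroup A] [Module F A] [AddCommGroup B] [Module F B]
variable [AddCommGroup B'] [Module F B'] [AddCommGroup C] [Module F C]
variable [AddCommGroup C'] [Module F C'] [AddCommGroup E] [Module F E]
variable [AddCommGroup E'] [Module F E'] [AddCommGroup D] [Module F D]
variable [LieRing L] [LieAlgebra F L]

/-- The associative product `a a' = ½(a ∘ a') + ½[a, a']` on `A`. -/
def mulA (S : CoordSetup F n A B B' C C' E E' D L) (a a' : A) : A :=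
  (2⁻¹ : F) • S.circA a a' + (2⁻¹ : F) • S.brA a a'

/-- The algebra `Ã = A ⊕ A^op` (direct sum of ideals); the second component is the
opposite copy `A^op`, so `(a₁, b₁)(a₂, b₂) = (a₁a₂, b₂b₁)`. -/
def mulAtil (S : CoordSetup F n A B B' C C' E E' D L) (x y : A × A) : A × A :=
  (mulA S x.1 y.1, mulA S y.2 x.2)

/-- The exchange involution `σ(a + bᵗ) = b + aᵗ` of `Ã = A ⊕ A^op`. -/
def sigmaA : A × A → A × A := Prod.swap

/-- The product of the algebra `𝒜 = A⁺ ⊕ A⁻` (the restriction of the product of `𝔞`,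
with first coordinate in `A⁺` and second coordinate in `A⁻`). -/
def mulAcal (S : CoordSetup F n A B B' C C' E E' D L) (x y : A × A) : A × A :=
  ((2⁻¹ : F) • (S.circA x.1 y.1 + S.circA x.2 y.2 + S.brA x.1 y.2 + S.brA x.2 y.1),
   (2⁻¹ : F) • (S.brA x.1 y.1 + S.brA x.2 y.2 + S.circA x.1 y.2 + S.circA x.2 y.1))

/-- The involution `γ|_𝒜` of `𝒜 = A⁺ ⊕ A⁻`: `γ(a⁺) = a⁺`, `γ(a⁻) = -a⁻`. -/
def gammaAcal : A × A → A × A := fun x => (x.1, -x.2)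

/-- The map `φ : Ã → 𝒜`, `φ(a + aᵗ) = a⁺` and `φ(a - aᵗ) = a⁻`; in coordinates
`φ(a, b) = (½(a + b), ½(a - b))`. -/
def phiA (F : Type*) [Field F] {A : Type*} [AddCommGroup A] [Module F A] :
    A × A → A × A :=
  fun x => ((2⁻¹ : F) • (x.1 + x.2), (2⁻¹ : F) • (x.1 - x.2))

end Stmt14Defs

end WG

namespace WG

section Stmt14Aux

open Matrix TensorProduct

set_option maxHeartbeats 2000000
set_option synthInstance.maxHeartbeats 400000

variable {F : Type*} [Field F] [CharZero F] {n : ℕ}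
variable {A B B' C C' E E' D L : Type*}
variable [AddCommGroup A] [Module F A] [AddCommGroup B] [Module F B]
variable [AddCommGroup B'] [Module F B'] [AddCommGroup C] [Module F C]
variable [AddCommGroup C'] [Module F C'] [AddCommGroup E] [Module F E]
variable [AddCommGroup E'] [Module F E'] [AddCommGroup D] [Module F D]
variable [LieRing L] [LieAlgebra F L]

/-- If `z` has some matrix entry equal to `1`, then `ιg z a = 0` forces `a = 0`. -/
lemma ig_eq_zero (S : CoordSetup F n A B B' C C' E E' D L)
    {z : slL F (n + 1)} {i j : Fin (n + 1)} (hz : (z : MatN F n) i j = 1)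
    {a : A} (h : S.ιg z a = 0) : a = 0 := by
  classical
  have hinj := S.bij.1
  have htot : totalMap S.ιg S.ιV S.ιV' S.ιS S.ιS' S.ιE S.ιE' S.ιD
      ((z ⊗ₜ[F] a : ↥(slL F (n+1)) ⊗[F] A), 0, 0, 0, 0, 0, 0, 0) = 0 := by
    simp only [totalMap, LinearMap.coprod_apply, TensorProduct.lift.tmul, map_zero,
      add_zero, h]
  have hzero : ((z ⊗ₜ[F] a : ↥(slL F (n+1)) ⊗[F] A),
      (0 : (Fin (n + 1) → F) ⊗[F] B), (0 : (Fin (n + 1) → F) ⊗[F] B'),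
      (0 : ↥(symM F (n + 1)) ⊗[F] C), (0 : ↥(symM F (n + 1)) ⊗[F] C'),
      (0 : ↥(skewM F (n + 1)) ⊗[F] E), (0 : ↥(skewM F (n + 1)) ⊗[F] E'), (0 : D)) = 0 :=
    hinj (by rw [htot, map_zero])
  have htmul : (z ⊗ₜ[F] a : ↥(slL F (n+1)) ⊗[F] A) = 0 := by
    have := congrArg Prod.fst hzero
    simpa using this
  let f : ↥(slL F (n + 1)) →ₗ[F] F :=
    { toFun := fun w => (w : MatN F n) i j
      map_add' := by intro u v; simp
      map_smul' := by
        intro c u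
        show (c • (u : MatN F n)) i j = _
        simp }
  have := congrArg (fun t => TensorProduct.lid F A (LinearMap.rTensor A f t)) htmul
  have hfz : f z = 1 := hz
  simpa [LinearMap.rTensor_tmul, TensorProduct.lid_tmul, hfz] using this

/-- The fundamental relation: `[a₁,a₂] + a₁∘a₂ + [a₂,a₁] - a₂∘a₁ = 0`. -/
lemma key_rel (hn : 4 ≤ n) (S : CoordSetup F n A B B' C C' E E' D L) (a₁ a₂ : A) :
    S.brA a₁ a₂ + S.circA a₁ a₂ + S.brA a₂ a₁ - S.circA a₂ a₁ = 0 := by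
  classical
  have h0 : (0 : ℕ) < n + 1 := by omega
  have h1 : (1 : ℕ) < n + 1 := by omega
  have h2 : (2 : ℕ) < n + 1 := by omega
  set i0 : Fin (n + 1) := ⟨0, h0⟩ with hi0
  set i1 : Fin (n + 1) := ⟨1, h1⟩ with hi1
  set i2 : Fin (n + 1) := ⟨2, h2⟩ with hi2
  have h01 : i0 ≠ i1 := by simp [hi0, hi1, Fin.ext_iff]
  have h12 : i1 ≠ i2 := by simp [hi1, hi2, Fin.ext_iff]
  have h02 : i0 ≠ i2 := by simp [hi0, hi2, Fin.ext_iff]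
  have h20 : i2 ≠ i0 := h02.symm
  have memsl : ∀ (i j : Fin (n+1)), i ≠ j →
      Matrix.single i j (1 : F) ∈ slL F (n + 1) := by
    intro i j hij
    show Matrix.trace _ = 0
    exact Matrix.trace_single_eq_of_ne i j (1 : F) hij
  set x : slL F (n + 1) := ⟨Matrix.single i0 i1 (1 : F), memsl _ _ h01⟩ with hx
  set y : slL F (n + 1) := ⟨Matrix.single i1 i2 (1 : F), memsl _ _ h12⟩ with hy
  set z : slL F (n + 1) := ⟨Matrix.single i0 i2 (1 : F), memsl _ _ h02⟩ with hz
  have hxy : (x : MatN F n) * (y : MatN F n) = Matrix.single i0 i2 (1 : F) := by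
    show Matrix.single i0 i1 (1 : F) * Matrix.single i1 i2 (1 : F) = _
    simp
  have hyx : (y : MatN F n) * (x : MatN F n) = 0 := by
    show Matrix.single i1 i2 (1 : F) * Matrix.single i0 i1 (1 : F) = 0
    exact Matrix.single_mul_single_of_ne (c := (1 : F)) i1 i2 i0 h20 (1 : F)
  have htr : Matrix.trace (Matrix.single i0 i2 (1 : F)) = 0 :=
    Matrix.trace_single_eq_of_ne i0 i2 (1 : F) h02
  have hproj : projSl (F := F) (n := n) (Matrix.single i0 i2 (1 : F)) = z := by
    apply Subtype.ext
    show Matrix.single i0 i2 (1 : F) -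
      (Matrix.trace (Matrix.single i0 i2 (1 : F)) / ((n + 1 : ℕ) : F)) •
        (1 : MatN F n) = (z : MatN F n)
    rw [htr, zero_div, zero_smul, sub_zero]
  have hcirc1 : circSl x y = z := by
    unfold circSl
    rw [hxy, hyx, add_zero, hproj]
  have hcirc2 : circSl y x = z := by
    unfold circSl
    rw [hxy, hyx, zero_add, hproj]
  have hbr1 : ⁅x, y⁆ = z := by
    apply Subtype.ext
    show ⁅(x : MatN F n), (y : MatN F n)⁆ = (z : MatN F n)
    rw [Ring.lie_def, hxy, hyx, sub_zero]
  have hbr2 : ⁅y, x⁆ = -z := by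
    rw [← lie_skew, hbr1]
  have htr1 : traceF (x : MatN F n) (y : MatN F n) = 0 := by
    unfold traceF
    rw [hxy, htr, zero_div]
  have htr2 : traceF (y : MatN F n) (x : MatN F n) = 0 := by
    unfold traceF
    rw [hyx]
    simp
  have hA := S.rel_gg x y a₁ a₂
  have hB := S.rel_gg y x a₂ a₁
  rw [hcirc1, hbr1, htr1, zero_smul, map_zero, add_zero] at hA
  rw [hcirc2, hbr2, htr2, zero_smul, map_zero, add_zero, map_neg,
    LinearMap.neg_apply] at hB
  have hskew : ⁅S.ιg x a₁, S.ιg y a₂⁆ = -⁅S.ιg y a₂, S.ιg x a₁⁆ :=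
    (lie_skew _ _).symm
  rw [hA, hB, neg_add, neg_neg] at hskew
  have hsum : S.ιg z ((2⁻¹ : F) • S.brA a₁ a₂ + (2⁻¹ : F) • S.circA a₁ a₂ +
      ((2⁻¹ : F) • S.brA a₂ a₁ - (2⁻¹ : F) • S.circA a₂ a₁)) = 0 := by
    rw [map_add, map_sub, map_add, hskew]
    abel
  have hzero : (2⁻¹ : F) • S.brA a₁ a₂ + (2⁻¹ : F) • S.circA a₁ a₂ +
      ((2⁻¹ : F) • S.brA a₂ a₁ - (2⁻¹ : F) • S.circA a₂ a₁) = 0 := by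
    refine ig_eq_zero S (i := i0) (j := i2) ?_ hsum
    rw [hz]
    simp
  have e : (2⁻¹ : F) • (S.brA a₁ a₂ + S.circA a₁ a₂ + S.brA a₂ a₁ - S.circA a₂ a₁) =
      (2⁻¹ : F) • S.brA a₁ a₂ + (2⁻¹ : F) • S.circA a₁ a₂ +
      ((2⁻¹ : F) • S.brA a₂ a₁ - (2⁻¹ : F) • S.circA a₂ a₁) := by
    module
  have h := e.trans hzero
  rcases smul_eq_zero.mp h with h' | h'
  · exact absurd h' (by norm_num)
  · exact h'

lemma circA_comm (hn : 4 ≤ n) (S : CoordSetup F n A B B' C C' E E' D L) (p q : A) :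
    S.circA p q = S.circA q p := by
  have h1 := key_rel hn S p q
  have h2 := key_rel hn S q p
  have e : (2 : F) • (S.circA p q - S.circA q p) =
      (S.brA p q + S.circA p q + S.brA q p - S.circA q p) -
      (S.brA q p + S.circA q p + S.brA p q - S.circA p q) := by
    module
  rw [h1, h2, sub_zero] at e
  rcases smul_eq_zero.mp e with h' | h'
  · exact absurd h' (by norm_num)
  · exact sub_eq_zero.mp h'

lemma brA_skew (hn : 4 ≤ n) (S : CoordSetup F n A B B' C C' E E' D L) (p q : A) :
    S.brA p q = -S.brA q p := by
  have h1 := key_rel hn S p q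
  have h2 := key_rel hn S q p
  have e : (2 : F) • (S.brA p q + S.brA q p) =
      (S.brA p q + S.circA p q + S.brA q p - S.circA q p) +
      (S.brA q p + S.circA q p + S.brA p q - S.circA p q) := by
    module
  rw [h1, h2, add_zero] at e
  rcases smul_eq_zero.mp e with h' | h'
  · exact absurd h' (by norm_num)
  · exact eq_neg_of_add_eq_zero_left h'

end Stmt14Aux

end WG

/-- Under the stated coordinate setup, let `A` carry the associative
product `a a' = ½(a∘a') + ½[a,a']` with unit `1`, let `A^op` be its opposite algebra and
let `Ã = A ⊕ A^op` (direct sum of ideals) carry the exchange involution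
`σ(a + bᵗ) = b + aᵗ`.  Then the map `φ : Ã → 𝒜 = A⁻ ⊕ A⁺` defined by `φ(a + aᵗ) = a⁺`
and `φ(a - aᵗ) = a⁻` is an isomorphism of algebras with involution, where `𝒜` carries
the involution `γ|_𝒜`; in particular `𝒜 ≅ A ⊕ A^op` as algebras with involution. -/
theorem stmt14 {F : Type*} [Field F] [CharZero F] (n : ℕ) (hn : 4 ≤ n)
    {A B B' C C' E E' D L : Type*}
    [AddCommGroup A] [Module F A] [AddCommGroup B] [Module F B]
    [AddCommGroup B'] [Module F B'] [AddCommGroup C] [Module F C]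
    [AddCommGroup C'] [Module F C'] [AddCommGroup E] [Module F E]
    [AddCommGroup E'] [Module F E'] [AddCommGroup D] [Module F D]
    [LieRing L] [LieAlgebra F L]
    (S : WG.CoordSetup F n A B B' C C' E E' D L) :
    Function.Bijective (WG.phiA F (A := A)) ∧
    (∀ x y : A × A, WG.phiA F (WG.mulAtil S x y) =
      WG.mulAcal S (WG.phiA F x) (WG.phiA F y)) ∧
    (∀ x : A × A, WG.phiA F (WG.sigmaA x) = WG.gammaAcal (WG.phiA F x)) ∧
    WG.phiA F (S.one, S.one) = (S.one, 0) := by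
  refine ⟨?_, ?_, ?_, ?_⟩
  · refine Function.bijective_iff_has_inverse.2
      ⟨fun x => (x.1 + x.2, x.1 - x.2), ?_, ?_⟩
    · intro x
      simp only [WG.phiA]
      refine Prod.ext ?_ ?_ <;> simp only [] <;> module
    · intro x
      simp only [WG.phiA]
      refine Prod.ext ?_ ?_ <;> simp only [] <;> module
  · intro x y
    obtain ⟨a1, b1⟩ := x
    obtain ⟨a2, b2⟩ := y
    have hc : S.circA b2 b1 = S.circA b1 b2 := WG.circA_comm hn S b2 b1
    have hb : S.brA b2 b1 = -S.brA b1 b2 := WG.brA_skew hn S b2 b1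
    simp only [WG.phiA, WG.mulAtil, WG.mulA, WG.mulAcal, hc, hb,
      map_add, map_sub, map_smul, LinearMap.add_apply, LinearMap.sub_apply,
      LinearMap.smul_apply, map_neg, LinearMap.neg_apply]
    refine Prod.ext ?_ ?_ <;> simp only [] <;> module
  · intro x
    simp only [WG.phiA, WG.sigmaA, WG.gammaAcal, Prod.swap]
    refine Prod.ext ?_ ?_ <;> simp only [] <;> module
  · simp only [WG.phiA]
    refine Prod.ext ?_ ?_ <;> simp only []
    · rw [← two_smul F S.one, smul_smul]
      norm_num
    · simp
end

section
/- Under the stated coordinate setup, the linear transformation γ : 𝔞 → 𝔞 defined by γ(a⁺) = a⁺, γ(a⁻) = −a⁻, γ(c) = −c, γ(e) = e, γ(c') = −c', γ(e') = e' (for a⁺ ∈ A⁺, a⁻ ∈ A⁻, c ∈ C, e ∈ E, c' ∈ C', e' ∈ E') is an antiautomorphism of order 2 of the associative algebra 𝔞, i.e. γ(xy) = γ(y)γ(x) for all x, y ∈ 𝔞 and γ² = id. -/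
attribute [local instance 100] LieRing.ofAssociativeRing

namespace WG

section Aux15

set_option maxHeartbeats 2000000
set_option synthInstance.maxHeartbeats 800000

open Matrix

variable {F : Type*} [Field F] [CharZero F] {n : ℕ}
variable {A B B' C C' E E' D L : Type*}
variable [AddCommGroup A] [Module F A] [AddCommGroup B] [Module F B]
variable [AddCommGroup B'] [Module F B'] [AddCommGroup C] [Module F C]
variable [AddCommGroup C'] [Module F C'] [AddCommGroup E] [Module F E]
variable [AddCommGroup E'] [Module F E'] [AddCommGroup D] [Module F D]
variable [LieRing L] [LieAlgebra F L]

open scoped TensorProduct in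
lemma ig_inj15 (S : CoordSetup F n A B B' C C' E E' D L)
    {z : slL F (n + 1)} (hz : z ≠ 0) {a : A} (h : S.ιg z a = 0) : a = 0 := by
  have htm : totalMap S.ιg S.ιV S.ιV' S.ιS S.ιS' S.ιE S.ιE' S.ιD
      (z ⊗ₜ[F] a, 0, 0, 0, 0, 0, 0, 0) = S.ιg z a := by
    simp [totalMap]
  have h0 : (z ⊗ₜ[F] a,
      (0 : (Fin (n + 1) → F) ⊗[F] B), (0 : (Fin (n + 1) → F) ⊗[F] B'),
      (0 : ↥(symM F (n + 1)) ⊗[F] C), (0 : ↥(symM F (n + 1)) ⊗[F] C'),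
      (0 : ↥(skewM F (n + 1)) ⊗[F] E), (0 : ↥(skewM F (n + 1)) ⊗[F] E'), (0 : D)) = 0 := by
    apply S.bij.injective
    rw [htm, h, map_zero]
  have hza : z ⊗ₜ[F] a = 0 := congrArg Prod.fst h0
  by_contra ha
  apply hz
  rw [← Module.forall_dual_apply_eq_zero_iff F]
  intro f
  have h2 : f z • a = 0 := by
    have := congrArg (fun t => (TensorProduct.lid F A)
      (TensorProduct.map f (LinearMap.id (R := F) (M := A)) t)) hza
    simpa using this
  rcases smul_eq_zero.mp h2 with hf | hf
  · exact hf
  · exact absurd hf ha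

lemma br_circ15 (S : CoordSetup F n A B B' C C' E E' D L) (hn : 4 ≤ n) :
    (∀ a₁ a₂ : A, S.brA a₁ a₂ = -S.brA a₂ a₁) ∧
      (∀ a₁ a₂ : A, S.circA a₁ a₂ = S.circA a₂ a₁) := by
  have hn1 : 1 < n + 1 := by omega
  have hn2 : 2 < n + 1 := by omega
  set i0 : Fin (n + 1) := ⟨0, by omega⟩ with hi0
  set i1 : Fin (n + 1) := ⟨1, by omega⟩ with hi1
  set i2 : Fin (n + 1) := ⟨2, by omega⟩ with hi2
  have h01 : i0 ≠ i1 := by simp [hi0, hi1, Fin.ext_iff]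
  have h12 : i1 ≠ i2 := by simp [hi1, hi2, Fin.ext_iff]
  have h02 : i0 ≠ i2 := by simp [hi0, hi2, Fin.ext_iff]
  have tr01 : Matrix.trace (Matrix.single i0 i1 (1 : F)) = 0 :=
    Matrix.trace_single_eq_of_ne i0 i1 (1 : F) h01
  have tr12 : Matrix.trace (Matrix.single i1 i2 (1 : F)) = 0 :=
    Matrix.trace_single_eq_of_ne i1 i2 (1 : F) h12
  have tr20 : Matrix.trace (Matrix.single i2 i0 (1 : F)) = 0 :=
    Matrix.trace_single_eq_of_ne i2 i0 (1 : F) h02.symm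
  have tr02 : Matrix.trace (Matrix.single i0 i2 (1 : F)) = 0 :=
    Matrix.trace_single_eq_of_ne i0 i2 (1 : F) h02
  have tr21 : Matrix.trace (Matrix.single i2 i1 (1 : F)) = 0 :=
    Matrix.trace_single_eq_of_ne i2 i1 (1 : F) h12.symm
  set x : slL F (n + 1) := ⟨Matrix.single i0 i1 (1 : F), tr01⟩ with hx
  set y : slL F (n + 1) := ⟨Matrix.single i1 i2 (1 : F), tr12⟩ with hy
  set w : slL F (n + 1) := ⟨Matrix.single i2 i0 (1 : F), tr20⟩ with hw
  set z02 : slL F (n + 1) := ⟨Matrix.single i0 i2 (1 : F), tr02⟩ with hz02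
  set z21 : slL F (n + 1) := ⟨Matrix.single i2 i1 (1 : F), tr21⟩ with hz21
  have mxy : (x : MatN F n) * (y : MatN F n) = Matrix.single i0 i2 (1 : F) := by
    show Matrix.single i0 i1 (1 : F) * Matrix.single i1 i2 (1 : F) = _
    rw [Matrix.single_mul_single_same, one_mul]
  have myx : (y : MatN F n) * (x : MatN F n) = 0 := by
    show Matrix.single i1 i2 (1 : F) * Matrix.single i0 i1 (1 : F) = 0
    exact Matrix.single_mul_single_of_ne _ _ _ _ (Ne.symm h02) _
  have mxw : (x : MatN F n) * (w : MatN F n) = 0 := by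
    show Matrix.single i0 i1 (1 : F) * Matrix.single i2 i0 (1 : F) = 0
    exact Matrix.single_mul_single_of_ne _ _ _ _ h12 _
  have mwx : (w : MatN F n) * (x : MatN F n) = Matrix.single i2 i1 (1 : F) := by
    show Matrix.single i2 i0 (1 : F) * Matrix.single i0 i1 (1 : F) = _
    rw [Matrix.single_mul_single_same, one_mul]
  have z02ne : z02 ≠ 0 := by
    intro hzz
    have := congrArg (fun m : slL F (n + 1) => (m : MatN F n) i0 i2) hzz
    simp [hz02] at this
  have z21ne : z21 ≠ 0 := by
    intro hzz
    have := congrArg (fun m : slL F (n + 1) => (m : MatN F n) i2 i1) hzz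
    simp [hz21] at this
  have brxy : ⁅x, y⁆ = z02 := by
    apply Subtype.ext
    show (x : MatN F n) * (y : MatN F n) - (y : MatN F n) * (x : MatN F n) = _
    rw [mxy, myx, sub_zero]
  have bryx : ⁅y, x⁆ = -z02 := by
    apply Subtype.ext
    show (y : MatN F n) * (x : MatN F n) - (x : MatN F n) * (y : MatN F n) = _
    rw [mxy, myx, zero_sub]
    rfl
  have brxw : ⁅x, w⁆ = -z21 := by
    apply Subtype.ext
    show (x : MatN F n) * (w : MatN F n) - (w : MatN F n) * (x : MatN F n) = _
    rw [mxw, mwx, zero_sub]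
    rfl
  have brwx : ⁅w, x⁆ = z21 := by
    apply Subtype.ext
    show (w : MatN F n) * (x : MatN F n) - (x : MatN F n) * (w : MatN F n) = _
    rw [mxw, mwx, sub_zero]
  have projz : ∀ m : MatN F n, Matrix.trace m = 0 →
      ∀ hm : Matrix.trace m = 0, (projSl m : slL F (n + 1)) = ⟨m, hm⟩ := by
    intro m hmtr hm
    apply Subtype.ext
    show m - (Matrix.trace m / ((n + 1 : ℕ) : F)) • (1 : MatN F n) = m
    rw [hmtr, zero_div, zero_smul, sub_zero]
  have cxy : circSl x y = z02 := by
    rw [circSl, mxy, myx, add_zero, hz02]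
    exact projz _ tr02 tr02
  have cyx : circSl y x = z02 := by
    rw [circSl, mxy, myx, zero_add, hz02]
    exact projz _ tr02 tr02
  have cxw : circSl x w = z21 := by
    rw [circSl, mxw, mwx, zero_add, hz21]
    exact projz _ tr21 tr21
  have cwx : circSl w x = z21 := by
    rw [circSl, mxw, mwx, add_zero, hz21]
    exact projz _ tr21 tr21
  have txy : traceF (x : MatN F n) (y : MatN F n) = 0 := by
    rw [traceF, mxy, tr02, zero_div]
  have tyx : traceF (y : MatN F n) (x : MatN F n) = 0 := by
    rw [traceF, myx, Matrix.trace_zero, zero_div]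
  have txw : traceF (x : MatN F n) (w : MatN F n) = 0 := by
    rw [traceF, mxw, Matrix.trace_zero, zero_div]
  have twx : traceF (w : MatN F n) (x : MatN F n) = 0 := by
    rw [traceF, mwx, tr21, zero_div]
  have key1 : ∀ a₁ a₂ : A,
      (2⁻¹ : F) • S.brA a₁ a₂ + (2⁻¹ : F) • S.circA a₁ a₂ +
        ((2⁻¹ : F) • S.brA a₂ a₁ - (2⁻¹ : F) • S.circA a₂ a₁) = 0 := by
    intro a₁ a₂
    have h1 := S.rel_gg x y a₁ a₂
    have h2 := S.rel_gg y x a₂ a₁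
    rw [cxy, brxy, txy, zero_smul, map_zero, add_zero] at h1
    rw [cyx, bryx, tyx, zero_smul, map_zero, add_zero, map_neg, LinearMap.neg_apply] at h2
    have h3 : ⁅S.ιg x a₁, S.ιg y a₂⁆ + ⁅S.ιg y a₂, S.ιg x a₁⁆ = 0 := by
      rw [← lie_skew (S.ιg x a₁) (S.ιg y a₂)]
      abel
    rw [h1, h2] at h3
    apply ig_inj15 S z02ne
    rw [map_add, map_add, map_sub]
    linear_combination (norm := module) h3
  have key2 : ∀ a₁ a₂ : A,
      (2⁻¹ : F) • S.brA a₁ a₂ - (2⁻¹ : F) • S.circA a₁ a₂ +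
        ((2⁻¹ : F) • S.brA a₂ a₁ + (2⁻¹ : F) • S.circA a₂ a₁) = 0 := by
    intro a₁ a₂
    have h1 := S.rel_gg x w a₁ a₂
    have h2 := S.rel_gg w x a₂ a₁
    rw [cxw, brxw, txw, zero_smul, map_zero, add_zero, map_neg, LinearMap.neg_apply] at h1
    rw [cwx, brwx, twx, zero_smul, map_zero, add_zero] at h2
    have h3 : ⁅S.ιg x a₁, S.ιg w a₂⁆ + ⁅S.ιg w a₂, S.ιg x a₁⁆ = 0 := by
      rw [← lie_skew (S.ιg x a₁) (S.ιg w a₂)]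
      abel
    rw [h1, h2] at h3
    apply ig_inj15 S z21ne
    rw [map_add, map_sub, map_add]
    linear_combination (norm := module) h3
  constructor
  · intro a₁ a₂
    linear_combination (norm := module) key1 a₁ a₂ + key2 a₁ a₂
  · intro a₁ a₂
    linear_combination (norm := module) key1 a₁ a₂ - key2 a₁ a₂

end Aux15

end WG
/-- Under the stated coordinate setup, the linear transformation
`γ : 𝔞 → 𝔞` defined by `γ(a⁺) = a⁺`, `γ(a⁻) = -a⁻`, `γ(c) = -c`, `γ(e) = e`,
`γ(c') = -c'`, `γ(e') = e'` is an antiautomorphism of order `2` of the associative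
algebra `𝔞`. -/
theorem stmt15 {F : Type*} [Field F] [CharZero F] (n : ℕ) (hn : 4 ≤ n)
    {A B B' C C' E E' D L : Type*}
    [AddCommGroup A] [Module F A] [AddCommGroup B] [Module F B]
    [AddCommGroup B'] [Module F B'] [AddCommGroup C] [Module F C]
    [AddCommGroup C'] [Module F C'] [AddCommGroup E] [Module F E]
    [AddCommGroup E'] [Module F E'] [AddCommGroup D] [Module F D]
    [LieRing L] [LieAlgebra F L]
    (S : WG.CoordSetup F n A B B' C C' E E' D L) :
    (∀ x y : WG.CoorA A C E C' E',
      WG.gammaA (WG.aMul S x y) = WG.aMul S (WG.gammaA y) (WG.gammaA x)) ∧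
    (∀ x : WG.CoorA A C E C' E', WG.gammaA (WG.gammaA x) = x) := by
  obtain ⟨hb, hc⟩ := WG.br_circ15 S hn
  constructor
  · rintro ⟨a1p, a1m, c1, e1, c1', e1'⟩ ⟨a2p, a2m, c2, e2, c2', e2'⟩
    simp only [WG.aMul, WG.gammaA, map_neg, LinearMap.neg_apply, neg_neg, Prod.mk.injEq]
    refine ⟨?_, ?_, ?_, ?_, ?_, ?_⟩
    · linear_combination (norm := module) (2⁻¹ : F) • hc a1p a2p + (2⁻¹ : F) • hc a1m a2m +
        (2⁻¹ : F) • hb a1p a2m + (2⁻¹ : F) • hb a1m a2p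
    · linear_combination (norm := module) (-(2⁻¹ : F)) • hb a1p a2p +
        (-(2⁻¹ : F)) • hb a1m a2m + (-(2⁻¹ : F)) • hc a1p a2m + (-(2⁻¹ : F)) • hc a1m a2p
    · module
    · module
    · module
    · module
  · rintro ⟨a1p, a1m, c1, e1, c1', e1'⟩
    simp [WG.gammaA]
end
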